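/- arXiv:1908.09043 — 6 statements merged into one kernel-verified Lean document; each statement's English description precedes it below -/
import Mathlib

section
/- Let f be m-strongly convex with L-Lipschitz gradient and let μ > 0. Then the forward map x ↦ x − μ∇f(x) is Lipschitz with constant σ = max(|1 − μ m|, |1 − μ L|); i.e., ‖(x − μ∇f(x)) − (x̂ − μ∇f(x̂))‖ ≤ σ‖x − x̂‖ for all x, x̂. -/
open InnerProductSpace

/-- Descent lemma: a function with `L`-Lipschitz gradient satisfies the quadratic upper bound. -/
lemma aux_descent {E : Type*} [NormedAddCommGroup E] [InnerProductSpace ℝ E] [CompleteSpace E]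
    (f : E → ℝ) (L : ℝ) (hdiff : Differentiable ℝ f)
    (hlip : ∀ x y : E, ‖gradient f x - gradient f y‖ ≤ L * ‖x - y‖) (x y : E) :
    f y ≤ f x + ⟪gradient f x, y - x⟫_ℝ + L / 2 * ‖y - x‖ ^ 2 := by
  set v := y - x with hv
  have hder : ∀ t : ℝ, HasDerivAt (fun t : ℝ => f (x + t • v))
      ⟪gradient f (x + t • v), v⟫_ℝ t := by
    intro t
    have hγ : HasDerivAt (fun t : ℝ => x + t • v) v t := by
      simpa using ((hasDerivAt_id t).smul_const v).const_add x
    have hf := (hdiff (x + t • v)).hasGradientAt.hasFDerivAt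
    have := hf.comp_hasDerivAt t hγ
    simpa [toDual_apply_apply, Function.comp_def] using this
  set g1 : ℝ → ℝ := fun t => f (x + t • v) - t * ⟪gradient f x, v⟫_ℝ - L * t ^ 2 / 2 * ‖v‖ ^ 2
    with hg1
  have hg1der : ∀ t : ℝ, HasDerivAt g1
      (⟪gradient f (x + t • v), v⟫_ℝ - ⟪gradient f x, v⟫_ℝ - L * t * ‖v‖ ^ 2) t := by
    intro t
    have h2 : HasDerivAt (fun t : ℝ => t * ⟪gradient f x, v⟫_ℝ) ⟪gradient f x, v⟫_ℝ t := by
      simpa using (hasDerivAt_id t).mul_const _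
    have h3 : HasDerivAt (fun t : ℝ => L * t ^ 2 / 2 * ‖v‖ ^ 2) (L * t * ‖v‖ ^ 2) t := by
      have h4 := (((hasDerivAt_pow 2 t).const_mul L).div_const 2).mul_const (‖v‖ ^ 2)
      refine h4.congr_deriv ?_
      ring
    exact ((hder t).sub h2).sub h3
  have hc : ContinuousOn g1 (Set.Icc 0 1) := fun t _ =>
    ((hg1der t).continuousAt).continuousWithinAt
  have hderiv_nonpos : ∀ t ∈ interior (Set.Icc (0:ℝ) 1), deriv g1 t ≤ 0 := by
    intro t ht
    rw [interior_Icc] at ht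
    rw [(hg1der t).deriv]
    have h0 : (0:ℝ) ≤ t := le_of_lt ht.1
    have hlipb : ‖gradient f (x + t • v) - gradient f x‖ ≤ L * (t * ‖v‖) := by
      have := hlip (x + t • v) x
      simpa [norm_smul, abs_of_nonneg h0] using this
    have hinner : ⟪gradient f (x + t • v), v⟫_ℝ - ⟪gradient f x, v⟫_ℝ ≤ L * (t * ‖v‖) * ‖v‖ := by
      rw [← inner_sub_left]
      exact (real_inner_le_norm _ _).trans (mul_le_mul_of_nonneg_right hlipb (norm_nonneg _))
    nlinarith [hinner]
  have hanti := antitoneOn_of_deriv_nonpos (convex_Icc 0 1) hc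
    (fun t _ => ((hg1der t).differentiableAt).differentiableWithinAt) hderiv_nonpos
  have h01 := hanti (Set.left_mem_Icc.2 zero_le_one) (Set.right_mem_Icc.2 zero_le_one) zero_le_one
  have e0 : g1 0 = f x := by simp [hg1]
  have e1 : g1 1 = f y - ⟪gradient f x, v⟫_ℝ - L / 2 * ‖v‖ ^ 2 := by
    have hxy : x + (1:ℝ) • v = y := by simp [hv]
    simp only [hg1]
    rw [hxy]
    ring
  rw [e0, e1] at h01
  linarith

/-- Co-coercivity from a two-sided quadratic bound (Baillon–Haddad style argument). -/
lemma aux_coco {E : Type*} [NormedAddCommGroup E] [InnerProductSpace ℝ E]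
    (h : E → ℝ) (gh : E → E) (K : ℝ) (hK : 0 < K)
    (hl : ∀ a b : E, 0 ≤ h b - h a - ⟪gh a, b - a⟫_ℝ)
    (hup : ∀ a b : E, h b - h a - ⟪gh a, b - a⟫_ℝ ≤ K / 2 * ‖b - a‖ ^ 2)
    (x y : E) : 1 / K * ‖gh x - gh y‖ ^ 2 ≤ ⟪gh x - gh y, x - y⟫_ℝ := by
  have hKne : K ≠ 0 := ne_of_gt hK
  have breg : ∀ a b : E, 1 / (2 * K) * ‖gh b - gh a‖ ^ 2 ≤ h b - h a - ⟪gh a, b - a⟫_ℝ := by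
    intro a b
    have h1 := hl a (b - (1 / K) • (gh b - gh a))
    have h2 := hup b (b - (1 / K) • (gh b - gh a))
    have e1 : b - (1 / K) • (gh b - gh a) - b = -((1 / K) • (gh b - gh a)) := by abel
    have e2 : b - (1 / K) • (gh b - gh a) - a = (b - a) - (1 / K) • (gh b - gh a) := by abel
    rw [e2] at h1
    rw [e1] at h2
    have i1 : ⟪gh a, (b - a) - (1 / K) • (gh b - gh a)⟫_ℝ
        = ⟪gh a, b - a⟫_ℝ - 1 / K * ⟪gh a, gh b - gh a⟫_ℝ := by
      rw [inner_sub_right, real_inner_smul_right]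
    have i2 : ⟪gh b, -((1 / K) • (gh b - gh a))⟫_ℝ = -(1 / K * ⟪gh b, gh b - gh a⟫_ℝ) := by
      rw [inner_neg_right, real_inner_smul_right]
    have i3 : ‖-((1 / K) • (gh b - gh a))‖ ^ 2 = (1 / K) ^ 2 * ‖gh b - gh a‖ ^ 2 := by
      rw [norm_neg, norm_smul, mul_pow, Real.norm_eq_abs, sq_abs]
    have i4 : 1 / K * ⟪gh b, gh b - gh a⟫_ℝ - 1 / K * ⟪gh a, gh b - gh a⟫_ℝ
        = 1 / K * ‖gh b - gh a‖ ^ 2 := by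
      rw [← mul_sub, ← inner_sub_left, real_inner_self_eq_norm_sq]
    have e5 : K / 2 * ((1 / K) ^ 2 * ‖gh b - gh a‖ ^ 2)
        = 1 / (2 * K) * ‖gh b - gh a‖ ^ 2 := by
      field_simp
    have e6 : 1 / K * ‖gh b - gh a‖ ^ 2 = 2 * (1 / (2 * K) * ‖gh b - gh a‖ ^ 2) := by
      field_simp
    rw [i1] at h1
    rw [i2, i3] at h2
    linarith
  have hco1 := breg x y
  have hco2 := breg y x
  have enrm2 : ‖gh y - gh x‖ ^ 2 = ‖gh x - gh y‖ ^ 2 := by rw [norm_sub_rev]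
  have hs : ⟪gh x - gh y, x - y⟫_ℝ = -⟪gh x, y - x⟫_ℝ - ⟪gh y, x - y⟫_ℝ := by
    rw [inner_sub_left]
    rw [show (x - y : E) = -(y - x) by abel]
    rw [inner_neg_right, inner_neg_right]
  have e8 : 1 / K * ‖gh x - gh y‖ ^ 2 = 2 * (1 / (2 * K) * ‖gh x - gh y‖ ^ 2) := by
    field_simp
  rw [hs, e8]
  rw [enrm2] at hco1
  linarith

/-- The key inequality for strongly convex functions with Lipschitz gradients. -/
lemma aux_key {E : Type*} [NormedAddCommGroup E] [InnerProductSpace ℝ E] [CompleteSpace E]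
    (f : E → ℝ) (m L : ℝ) (hm : 0 < m) (hmL : m ≤ L) (hdiff : Differentiable ℝ f)
    (hsc : ∀ x y : E, f y ≥ f x + ⟪gradient f x, y - x⟫_ℝ + m / 2 * ‖y - x‖ ^ 2)
    (hlip : ∀ x y : E, ‖gradient f x - gradient f y‖ ≤ L * ‖x - y‖) (x y : E) :
    ‖gradient f x - gradient f y‖ ^ 2 + m * L * ‖x - y‖ ^ 2
      ≤ (m + L) * ⟪gradient f x - gradient f y, x - y⟫_ℝ := by
  have hmono : ∀ a b : E, m * ‖a - b‖ ^ 2 ≤ ⟪gradient f a - gradient f b, a - b⟫_ℝ := by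
    intro a b
    have h1 := hsc a b
    have h2 := hsc b a
    have e1 : b - a = -(a - b) := by abel
    rw [e1, inner_neg_right, norm_neg] at h1
    rw [inner_sub_left]
    linarith
  by_cases hml : m = L
  · subst hml
    have hdL := hlip x y
    have hsq : ‖gradient f x - gradient f y‖ ^ 2 ≤ (m * ‖x - y‖) ^ 2 := by
      have := pow_le_pow_left₀ (norm_nonneg _) hdL 2
      simpa using this
    nlinarith [mul_le_mul_of_nonneg_left (hmono x y) hm.le]
  · have hK : 0 < L - m := sub_pos.2 (lt_of_le_of_ne hmL hml)
    have hnorm : ∀ a b : E, ‖b‖ ^ 2 = ‖a‖ ^ 2 + 2 * ⟪a, b - a⟫_ℝ + ‖b - a‖ ^ 2 := by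
      intro a b
      have h := norm_add_sq_real a (b - a)
      simpa using h
    have hghinner : ∀ a b : E,
        ⟪gradient f a - m • a, b - a⟫_ℝ = ⟪gradient f a, b - a⟫_ℝ - m * ⟪a, b - a⟫_ℝ := by
      intro a b
      rw [inner_sub_left, real_inner_smul_left]
    have hl : ∀ a b : E, 0 ≤ (fun z => f z - m / 2 * ‖z‖ ^ 2) b
        - (fun z => f z - m / 2 * ‖z‖ ^ 2) a - ⟪(fun z => gradient f z - m • z) a, b - a⟫_ℝ := by
      intro a b
      have h1 := hsc a b
      simp only
      rw [hghinner a b, hnorm a b]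
      linarith
    have hup : ∀ a b : E, (fun z => f z - m / 2 * ‖z‖ ^ 2) b
        - (fun z => f z - m / 2 * ‖z‖ ^ 2) a - ⟪(fun z => gradient f z - m • z) a, b - a⟫_ℝ
        ≤ (L - m) / 2 * ‖b - a‖ ^ 2 := by
      intro a b
      have h1 := aux_descent f L hdiff hlip a b
      simp only
      rw [hghinner a b, hnorm a b]
      linarith
    have hcoco := aux_coco (fun z => f z - m / 2 * ‖z‖ ^ 2) (fun z => gradient f z - m • z)
      (L - m) hK hl hup x y
    have egh : (gradient f x - m • x) - (gradient f y - m • y)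
        = (gradient f x - gradient f y) - m • (x - y) := by
      rw [smul_sub]
      abel
    rw [egh] at hcoco
    have einner : ⟪(gradient f x - gradient f y) - m • (x - y), x - y⟫_ℝ
        = ⟪gradient f x - gradient f y, x - y⟫_ℝ - m * ‖x - y‖ ^ 2 := by
      rw [inner_sub_left, real_inner_smul_left, real_inner_self_eq_norm_sq]
    have enorm2' : ‖(gradient f x - gradient f y) - m • (x - y)‖ ^ 2
        = ‖gradient f x - gradient f y‖ ^ 2
          - 2 * (m * ⟪gradient f x - gradient f y, x - y⟫_ℝ) + m ^ 2 * ‖x - y‖ ^ 2 := by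
      rw [norm_sub_sq_real, real_inner_smul_right, norm_smul, mul_pow, Real.norm_eq_abs, sq_abs]
    rw [einner, enorm2'] at hcoco
    have hKco := mul_le_mul_of_nonneg_left hcoco hK.le
    have e9 : (L - m) * (1 / (L - m) * (‖gradient f x - gradient f y‖ ^ 2
          - 2 * (m * ⟪gradient f x - gradient f y, x - y⟫_ℝ) + m ^ 2 * ‖x - y‖ ^ 2))
        = ‖gradient f x - gradient f y‖ ^ 2
          - 2 * (m * ⟪gradient f x - gradient f y, x - y⟫_ℝ) + m ^ 2 * ‖x - y‖ ^ 2 := by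
      field_simp
    rw [e9] at hKco
    linarith

/-- Pure algebra: the contraction bound from the key inequality. -/
lemma aux_contract {E : Type*} [NormedAddCommGroup E] [InnerProductSpace ℝ E]
    (m L μ σ : ℝ) (u d : E) (hm : 0 < m) (hmL : m ≤ L) (hμ : 0 < μ)
    (hσ0 : 0 ≤ σ) (hσ1 : (1 - μ * m) ^ 2 ≤ σ ^ 2) (hσ2 : (1 - μ * L) ^ 2 ≤ σ ^ 2)
    (hmono : m * ‖u‖ ^ 2 ≤ ⟪d, u⟫_ℝ) (hdL : ‖d‖ ≤ L * ‖u‖)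
    (keyN : ‖d‖ ^ 2 + m * L * ‖u‖ ^ 2 ≤ (m + L) * ⟪d, u⟫_ℝ) :
    ‖u - μ • d‖ ≤ σ * ‖u‖ := by
  have hd2 : m ^ 2 * ‖u‖ ^ 2 ≤ ‖d‖ ^ 2 := by
    by_cases hu0 : ‖u‖ = 0
    · rw [hu0]
      simpa using sq_nonneg ‖d‖
    · have hup : 0 < ‖u‖ := (norm_nonneg u).lt_of_ne' hu0
      have P : m * ‖u‖ ≤ ‖d‖ := by
        have hcs := (real_inner_le_norm d u)
        nlinarith [hmono, hcs, hup]
      have := mul_self_le_mul_self (mul_nonneg hm.le (norm_nonneg u)) P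
      nlinarith [this]
  have hdL2 : ‖d‖ ^ 2 ≤ L ^ 2 * ‖u‖ ^ 2 := by
    have := pow_le_pow_left₀ (norm_nonneg d) hdL 2
    nlinarith [this]
  have hexp : ‖u - μ • d‖ ^ 2 = ‖u‖ ^ 2 - 2 * (μ * ⟪d, u⟫_ℝ) + μ ^ 2 * ‖d‖ ^ 2 := by
    rw [norm_sub_sq_real, real_inner_smul_right, norm_smul, mul_pow, Real.norm_eq_abs, sq_abs,
      real_inner_comm u d]
  have hsq : ‖u - μ • d‖ ^ 2 ≤ (σ * ‖u‖) ^ 2 := by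
    have hmL0 : 0 < m + L := by linarith
    rcases le_or_gt (μ * (m + L)) 2 with hcase | hcase
    · have T1 : 0 ≤ 2 * μ * ((m + L) * ⟪d, u⟫_ℝ - (m * L * ‖u‖ ^ 2 + ‖d‖ ^ 2)) :=
        mul_nonneg (by positivity) (by linarith)
      have T2 : 0 ≤ (2 - μ * (m + L)) * μ * (‖d‖ ^ 2 - m ^ 2 * ‖u‖ ^ 2) :=
        mul_nonneg (mul_nonneg (by linarith) hμ.le) (by linarith)
      have hq : (m + L) * ‖u - μ • d‖ ^ 2 ≤ (m + L) * ((1 - μ * m) ^ 2 * ‖u‖ ^ 2) := by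
        rw [hexp]
        linarith [T1, T2]
      have hq2 : ‖u - μ • d‖ ^ 2 ≤ (1 - μ * m) ^ 2 * ‖u‖ ^ 2 :=
        le_of_mul_le_mul_left hq hmL0
      have := mul_le_mul_of_nonneg_right hσ1 (sq_nonneg ‖u‖)
      nlinarith [hq2, this]
    · have T1 : 0 ≤ 2 * μ * ((m + L) * ⟪d, u⟫_ℝ - (m * L * ‖u‖ ^ 2 + ‖d‖ ^ 2)) :=
        mul_nonneg (by positivity) (by linarith)
      have T2 : 0 ≤ (μ * (m + L) - 2) * μ * (L ^ 2 * ‖u‖ ^ 2 - ‖d‖ ^ 2) :=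
        mul_nonneg (mul_nonneg (by linarith) hμ.le) (by linarith)
      have hq : (m + L) * ‖u - μ • d‖ ^ 2 ≤ (m + L) * ((1 - μ * L) ^ 2 * ‖u‖ ^ 2) := by
        rw [hexp]
        linarith [T1, T2]
      have hq2 : ‖u - μ • d‖ ^ 2 ≤ (1 - μ * L) ^ 2 * ‖u‖ ^ 2 :=
        le_of_mul_le_mul_left hq hmL0
      have := mul_le_mul_of_nonneg_right hσ2 (sq_nonneg ‖u‖)
      nlinarith [hq2, this]
  have hfin := Real.sqrt_le_sqrt hsq
  rwa [Real.sqrt_sq (norm_nonneg _), Real.sqrt_sq (mul_nonneg hσ0 (norm_nonneg _))] at hfin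

theorem stmt2 (n : ℕ) (f : EuclideanSpace ℝ (Fin n) → ℝ) (m L μ : ℝ)
    (hm : 0 < m) (hmL : m ≤ L) (hμ : 0 < μ)
    (hdiff : Differentiable ℝ f)
    (hsc : ∀ x y : EuclideanSpace ℝ (Fin n),
      f y ≥ f x + ⟪gradient f x, y - x⟫_ℝ + m / 2 * ‖y - x‖ ^ 2)
    (hlip : ∀ x y : EuclideanSpace ℝ (Fin n),
      ‖gradient f x - gradient f y‖ ≤ L * ‖x - y‖) :
    ∀ x y : EuclideanSpace ℝ (Fin n),
      ‖(x - μ • gradient f x) - (y - μ • gradient f y)‖ ≤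
        max |1 - μ * m| |1 - μ * L| * ‖x - y‖ := by
  intro x y
  have hmono : m * ‖x - y‖ ^ 2 ≤ ⟪gradient f x - gradient f y, x - y⟫_ℝ := by
    have h1 := hsc x y
    have h2 := hsc y x
    have e1 : y - x = -(x - y) := by abel
    rw [e1, inner_neg_right, norm_neg] at h1
    rw [inner_sub_left]
    linarith
  have hσ0 : (0:ℝ) ≤ max |1 - μ * m| |1 - μ * L| :=
    le_trans (abs_nonneg _) (le_max_left _ _)
  have hσ1 : (1 - μ * m) ^ 2 ≤ (max |1 - μ * m| |1 - μ * L|) ^ 2 := by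
    calc (1 - μ * m) ^ 2 = |1 - μ * m| ^ 2 := (sq_abs _).symm
      _ ≤ _ := pow_le_pow_left₀ (abs_nonneg _) (le_max_left _ _) 2
  have hσ2 : (1 - μ * L) ^ 2 ≤ (max |1 - μ * m| |1 - μ * L|) ^ 2 := by
    calc (1 - μ * L) ^ 2 = |1 - μ * L| ^ 2 := (sq_abs _).symm
      _ ≤ _ := pow_le_pow_left₀ (abs_nonneg _) (le_max_right _ _) 2
  have hcon := aux_contract m L μ (max |1 - μ * m| |1 - μ * L|)
    (x - y) (gradient f x - gradient f y) hm hmL hμ hσ0 hσ1 hσ2 hmono (hlip x y)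
    (aux_key f m L hm hmL hdiff hsc hlip x y)
  have e0 : (x - μ • gradient f x) - (y - μ • gradient f y)
      = (x - y) - μ • (gradient f x - gradient f y) := by
    rw [smul_sub]
    abel
  rw [e0]
  exact hcon
end

section
/- Let f be m-strongly convex with L-Lipschitz gradient, g proper closed convex, and 0 < μ < 2/L. Then the proximal gradient flow ẋ = −(x − prox_{μg}(x − μ∇f(x))) has a globally exponentially stable equilibrium x⋆ with rate ρ = 1 − σ, σ = max(|1−μm|,|1−μL|): ‖x(t) − x⋆‖ ≤ e^{−(1−σ)t}‖x(0) − x⋆‖ for all t ≥ 0. -/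
open InnerProductSpace

section AuxLemmas

variable {E : Type*} [NormedAddCommGroup E] [InnerProductSpace ℝ E]

lemma coco_lemma1 (f : E → ℝ) (G : E → E) (c : ℝ) (hc : 0 ≤ c)
    (h1 : ∀ x y, f x + ⟪G x, y - x⟫_ℝ ≤ f y)
    (h2 : ∀ x y, f y ≤ f x + ⟪G x, y - x⟫_ℝ + c / 2 * ‖y - x‖ ^ 2) :
    ∀ x y, ‖G x - G y‖ ^ 2 ≤ c * ⟪G x - G y, x - y⟫_ℝ := by
  intro x y
  rcases hc.eq_or_lt with hc0 | hcpos
  · -- c = 0 : f is affine, G constant in the relevant direction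
    subst hc0
    have key : ∀ a b, f b = f a + ⟪G a, b - a⟫_ℝ := by
      intro a b
      have := h1 a b
      have := h2 a b
      simp at *
      linarith
    have horth : ∀ z, ⟪G x - G y, z - y⟫_ℝ = 0 := by
      intro z
      have e1 := key x z
      have e2 := key y z
      have e3 := key x y
      rw [inner_sub_left]
      have : ⟪G x, z - x⟫_ℝ - ⟪G x, y - x⟫_ℝ = ⟪G y, z - y⟫_ℝ := by linarith
      have h4 : ⟪G x, z - y⟫_ℝ = ⟪G y, z - y⟫_ℝ := by
        rw [← this]
        rw [← inner_sub_right]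
        congr 1
        abel
      linarith
    have := horth (y + (G x - G y))
    simp only [add_sub_cancel_left] at this
    rw [real_inner_self_eq_norm_sq] at this
    simp [this]
  · -- c > 0
    have key : ∀ a b, f a + ⟪G a, b - a⟫_ℝ ≤ f b - 1 / (2 * c) * ‖G a - G b‖ ^ 2 := by
      intro a b
      set w : E := b - c⁻¹ • (G b - G a) with hw
      have hA := h1 a w
      have hB := h2 b w
      have hwb : w - b = -(c⁻¹ • (G b - G a)) := by rw [hw]; abel
      have hnorm : ‖w - b‖ ^ 2 = c⁻¹ ^ 2 * ‖G b - G a‖ ^ 2 := by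
        rw [hwb, norm_neg, norm_smul, Real.norm_eq_abs, abs_of_nonneg (inv_nonneg.mpr hc)]
        ring
      have hib : ⟪G b, w - b⟫_ℝ = -(c⁻¹ * ⟪G b, G b - G a⟫_ℝ) := by
        rw [hwb, inner_neg_right, real_inner_smul_right]
      have hia : ⟪G a, w - a⟫_ℝ = ⟪G a, b - a⟫_ℝ - c⁻¹ * ⟪G a, G b - G a⟫_ℝ := by
        have : w - a = (b - a) - c⁻¹ • (G b - G a) := by rw [hw]; abel
        rw [this, inner_sub_right, real_inner_smul_right]
      rw [hia] at hA
      rw [hib, hnorm] at hB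
      have hGG : ⟪G b, G b - G a⟫_ℝ - ⟪G a, G b - G a⟫_ℝ = ‖G b - G a‖ ^ 2 := by
        rw [← inner_sub_left, real_inner_self_eq_norm_sq]
      have hsym : ‖G a - G b‖ = ‖G b - G a‖ := norm_sub_rev _ _
      rw [hsym]
      have hcinv : c⁻¹ > 0 := inv_pos.mpr hcpos
      have h12 : (1:ℝ) / (2 * c) = c⁻¹ / 2 := by
        field_simp
      rw [h12]
      have hcc : c / 2 * (c⁻¹ ^ 2 * ‖G b - G a‖ ^ 2) = c⁻¹ / 2 * ‖G b - G a‖ ^ 2 := by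
        field_simp
      rw [hcc] at hB
      have hqq : c⁻¹ * ⟪G b, G b - G a⟫_ℝ - c⁻¹ * ⟪G a, G b - G a⟫_ℝ
          = c⁻¹ * ‖G b - G a‖ ^ 2 := by rw [← mul_sub, hGG]
      nlinarith [hA, hB, hqq]
    have k1 := key x y
    have k2 := key y x
    have hsym : ‖G y - G x‖ = ‖G x - G y‖ := norm_sub_rev _ _
    rw [hsym] at k2
    have hinner : ⟪G x, y - x⟫_ℝ + ⟪G y, x - y⟫_ℝ = -⟪G x - G y, x - y⟫_ℝ := by
      rw [inner_sub_left]
      have : ⟪G x, y - x⟫_ℝ = -⟪G x, x - y⟫_ℝ := by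
        rw [← inner_neg_right]; congr 1; abel
      linarith
    have hcpos' : (0:ℝ) < 2 * c := by linarith
    have : 1 / (2 * c) * ‖G x - G y‖ ^ 2 + 1 / (2 * c) * ‖G x - G y‖ ^ 2
        ≤ ⟪G x - G y, x - y⟫_ℝ := by linarith
    have h2c : ‖G x - G y‖ ^ 2 / c ≤ ⟪G x - G y, x - y⟫_ℝ := by
      rw [div_eq_mul_inv]
      calc ‖G x - G y‖ ^ 2 * c⁻¹ = 1 / (2 * c) * ‖G x - G y‖ ^ 2 + 1 / (2 * c) * ‖G x - G y‖ ^ 2 := by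
            field_simp; ring
        _ ≤ _ := this
    calc ‖G x - G y‖ ^ 2 = c * (‖G x - G y‖ ^ 2 / c) := by field_simp
      _ ≤ c * ⟪G x - G y, x - y⟫_ℝ := by
          exact mul_le_mul_of_nonneg_left h2c hc

lemma prox_nonexpansive1 (g : E → ℝ) (μ : ℝ) (hμ : 0 < μ)
    (hg : ConvexOn ℝ Set.univ g) (P : E → E)
    (hP : ∀ v, IsMinOn (fun z => g z + 1 / (2 * μ) * ‖z - v‖ ^ 2) Set.univ (P v)) :
    ∀ u v, ‖P u - P v‖ ≤ ‖u - v‖ := by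
  have var : ∀ v z, μ * (g (P v) - g z) ≤ ⟪P v - v, z - P v⟫_ℝ := by
    intro v z
    set p := P v with hp
    have hmin : ∀ w, g p + 1 / (2 * μ) * ‖p - v‖ ^ 2 ≤ g w + 1 / (2 * μ) * ‖w - v‖ ^ 2 :=
      fun w => isMinOn_iff.mp (hP v) w (Set.mem_univ w)
    set N := ‖z - p‖ ^ 2 with hN
    have hN0 : 0 ≤ N := sq_nonneg _
    have step : ∀ t : ℝ, 0 < t → t ≤ 1 →
        μ * (g p - g z) ≤ ⟪p - v, z - p⟫_ℝ + t / 2 * N := by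
      intro t ht0 ht1
      have hzt : (1 - t) • p + t • z = p + t • (z - p) := by
        rw [smul_sub, sub_smul, one_smul]
        abel
      have hconv := hg.2 (Set.mem_univ p) (Set.mem_univ z)
        (by linarith : (0:ℝ) ≤ 1 - t) ht0.le (by ring)
      rw [hzt] at hconv
      have hm := hmin (p + t • (z - p))
      have hnorm : ‖p + t • (z - p) - v‖ ^ 2
          = ‖p - v‖ ^ 2 + 2 * (t * ⟪p - v, z - p⟫_ℝ) + t ^ 2 * N := by
        have : p + t • (z - p) - v = (p - v) + t • (z - p) := by abel
        rw [this, @norm_add_sq_real, real_inner_smul_right, norm_smul]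
        rw [Real.norm_eq_abs, abs_of_nonneg ht0.le]
        ring
      rw [hnorm] at hm
      have h2μ : (0:ℝ) < 2 * μ := by linarith
      have expand : g p ≤ (1 - t) * g p + t * g z
          + 1 / (2 * μ) * (2 * (t * ⟪p - v, z - p⟫_ℝ) + t ^ 2 * N) := by
        calc g p = g p + 1 / (2 * μ) * ‖p - v‖ ^ 2 - 1 / (2 * μ) * ‖p - v‖ ^ 2 := by ring
          _ ≤ g (p + t • (z - p)) + 1 / (2 * μ) * (‖p - v‖ ^ 2
              + 2 * (t * ⟪p - v, z - p⟫_ℝ) + t ^ 2 * N) - 1 / (2 * μ) * ‖p - v‖ ^ 2 := by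
              linarith
          _ ≤ (1 - t) * g p + t * g z
              + 1 / (2 * μ) * (2 * (t * ⟪p - v, z - p⟫_ℝ) + t ^ 2 * N) := by
              simp only [smul_eq_mul] at hconv
              linarith
      -- t * (g p - g z) ≤ (t/μ) * ⟪⟫ + t²/(2μ) N ; divide by t/μ > 0
      have key : t * (g p - g z) ≤ t / μ * ⟪p - v, z - p⟫_ℝ + t ^ 2 / (2 * μ) * N := by
        have hrw : 1 / (2 * μ) * (2 * (t * ⟪p - v, z - p⟫_ℝ) + t ^ 2 * N)
            = t / μ * ⟪p - v, z - p⟫_ℝ + t ^ 2 / (2 * μ) * N := by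
          field_simp
        rw [hrw] at expand
        nlinarith [expand]
      have := mul_le_mul_of_nonneg_left key (le_of_lt (by positivity : (0:ℝ) < μ / t))
      calc μ * (g p - g z) = μ / t * (t * (g p - g z)) := by field_simp
        _ ≤ μ / t * (t / μ * ⟪p - v, z - p⟫_ℝ + t ^ 2 / (2 * μ) * N) := this
        _ = ⟪p - v, z - p⟫_ℝ + t / 2 * N := by field_simp
    apply le_of_forall_pos_le_add
    intro ε hε
    have ht0 : 0 < min 1 (2 * ε / (N + 1)) := by positivity
    have ht1 : min 1 (2 * ε / (N + 1)) ≤ 1 := min_le_left _ _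
    have := step _ ht0 ht1
    have hbound : min 1 (2 * ε / (N + 1)) / 2 * N ≤ ε := by
      have h1 : min 1 (2 * ε / (N + 1)) ≤ 2 * ε / (N + 1) := min_le_right _ _
      have hN1 : (0:ℝ) < N + 1 := by linarith
      have : min 1 (2 * ε / (N + 1)) / 2 * N ≤ (2 * ε / (N + 1)) / 2 * N := by
        apply mul_le_mul_of_nonneg_right _ hN0
        linarith
      calc min 1 (2 * ε / (N + 1)) / 2 * N ≤ (2 * ε / (N + 1)) / 2 * N := this
        _ = ε * (N / (N + 1)) := by field_simp
        _ ≤ ε * 1 := by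
            apply mul_le_mul_of_nonneg_left _ hε.le
            rw [div_le_one hN1]; linarith
        _ = ε := mul_one ε
    linarith
  intro u v
  have h1 := var v (P u)
  have h2 := var u (P v)
  have hsum : 0 ≤ ⟪P v - v, P u - P v⟫_ℝ + ⟪P u - u, P v - P u⟫_ℝ := by linarith
  have hrw : ⟪P v - v, P u - P v⟫_ℝ + ⟪P u - u, P v - P u⟫_ℝ
      = ⟪u - v, P u - P v⟫_ℝ - ‖P u - P v‖ ^ 2 := by
    have e1 : ⟪P u - u, P v - P u⟫_ℝ = -⟪P u - u, P u - P v⟫_ℝ := by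
      rw [← inner_neg_right]; congr 1; abel
    rw [e1, ← sub_eq_add_neg, ← inner_sub_left]
    have e2 : P v - v - (P u - u) = (u - v) - (P u - P v) := by abel
    rw [e2, inner_sub_left, real_inner_self_eq_norm_sq]
  rw [hrw] at hsum
  have hCS := real_inner_le_norm (u - v) (P u - P v)
  nlinarith [norm_nonneg (P u - P v), norm_nonneg (u - v)]

end AuxLemmas

lemma keyreal1 (a μ c ne nh s : ℝ) (hμ : 0 < μ) (hc : 0 ≤ c)
    (hne : 0 ≤ ne) (hnh : 0 ≤ nh)
    (hcs : ne ^ 2 ≤ c * s) (hCS : s ≤ ne * nh) (hCS2 : -(ne * nh) ≤ s) :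
    a ^ 2 * nh ^ 2 - 2 * a * μ * s + μ ^ 2 * ne ^ 2
      ≤ (max |a| |a - μ * c|) ^ 2 * nh ^ 2 := by
  set σ := max |a| |a - μ * c| with hσ
  have hσa : |a| ≤ σ := le_max_left _ _
  have hσb : |a - μ * c| ≤ σ := le_max_right _ _
  have hσ0 : 0 ≤ σ := le_trans (abs_nonneg a) hσa
  have hsa : a ^ 2 ≤ σ ^ 2 := by
    calc a ^ 2 = |a| ^ 2 := (sq_abs a).symm
      _ ≤ σ ^ 2 := by nlinarith [abs_nonneg a]
  have hsb : (a - μ * c) ^ 2 ≤ σ ^ 2 := by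
    calc (a - μ * c) ^ 2 = |a - μ * c| ^ 2 := (sq_abs _).symm
      _ ≤ σ ^ 2 := by nlinarith [abs_nonneg (a - μ * c)]
  -- basic derived facts
  have hs0 : 0 ≤ s := by
    rcases hc.eq_or_lt with h0 | hpos
    · -- c = 0 : ne = 0, then |s| ≤ 0
      have hne0 : ne = 0 := by nlinarith
      nlinarith
    · nlinarith [sq_nonneg ne]
  have hnele : ne ≤ c * nh := by
    rcases (le_or_gt ne 0) with h0 | hpos
    · nlinarith
    · nlinarith
  have hsle : s ≤ c * nh ^ 2 := by nlinarith
  rcases le_or_gt a 0 with ha | ha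
  · -- a ≤ 0 : bound by (a - μc)²
    have key : a ^ 2 * nh ^ 2 - 2 * a * μ * s + μ ^ 2 * ne ^ 2
        ≤ (a - μ * c) ^ 2 * nh ^ 2 := by
      nlinarith [mul_nonneg (mul_nonneg hμ.le hc) (mul_nonneg hne hnh),
        mul_nonneg (neg_nonneg.mpr ha) (mul_nonneg hμ.le (sub_nonneg.mpr hCS)),
        mul_nonneg (mul_nonneg hμ.le hμ.le) (sub_nonneg.mpr (by nlinarith : ne^2 ≤ c^2*nh^2)),
        mul_nonneg (neg_nonneg.mpr ha) hμ.le, sq_nonneg (ne - c*nh)]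
    have hfin : (a - μ * c) ^ 2 * nh ^ 2 ≤ σ ^ 2 * nh ^ 2 :=
      mul_le_mul_of_nonneg_right hsb (sq_nonneg nh)
    linarith
  · rcases le_or_gt (μ * c) (2 * a) with hcase | hcase
    · -- small μc: bound by a²
      have key : a ^ 2 * nh ^ 2 - 2 * a * μ * s + μ ^ 2 * ne ^ 2 ≤ a ^ 2 * nh ^ 2 := by
        have e1 : μ ^ 2 * ne ^ 2 ≤ μ ^ 2 * (c * s) :=
          mul_le_mul_of_nonneg_left hcs (by positivity)
        have e2 : μ ^ 2 * (c * s) = (μ * c) * (μ * s) := by ring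
        have e3 : (μ * c) * (μ * s) ≤ (2 * a) * (μ * s) :=
          mul_le_mul_of_nonneg_right hcase (mul_nonneg hμ.le hs0)
        have e4 : (2 * a) * (μ * s) = 2 * a * μ * s := by ring
        linarith
      have hfin : a ^ 2 * nh ^ 2 ≤ σ ^ 2 * nh ^ 2 :=
        mul_le_mul_of_nonneg_right hsa (sq_nonneg nh)
      linarith
    · -- large μc: bound by (a - μc)²
      have key : a ^ 2 * nh ^ 2 - 2 * a * μ * s + μ ^ 2 * ne ^ 2
          ≤ (a - μ * c) ^ 2 * nh ^ 2 := by
        have d1 : s - c * nh ^ 2 ≤ 0 := by linarith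
        have d2 : ne ^ 2 - c ^ 2 * nh ^ 2 ≤ c * (s - c * nh ^ 2) := by
          have : c * (s - c * nh ^ 2) = c * s - c ^ 2 * nh ^ 2 := by ring
          linarith
        have d3 : μ ^ 2 * (ne ^ 2 - c ^ 2 * nh ^ 2) ≤ μ ^ 2 * (c * (s - c * nh ^ 2)) :=
          mul_le_mul_of_nonneg_left d2 (by positivity)
        have d4 : μ ^ 2 * (c * (s - c * nh ^ 2)) = (μ * c) * (μ * (s - c * nh ^ 2)) := by
          ring
        have d5 : (μ * c) * (μ * (s - c * nh ^ 2)) ≤ (2 * a) * (μ * (s - c * nh ^ 2)) :=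
          mul_le_mul_of_nonpos_right hcase.le
            (mul_nonpos_of_nonneg_of_nonpos hμ.le d1)
        have e1 : (2 * a) * (μ * (s - c * nh ^ 2)) = 2 * a * μ * s - 2 * a * μ * c * nh ^ 2 := by
          ring
        have e2 : μ ^ 2 * (ne ^ 2 - c ^ 2 * nh ^ 2) = μ ^ 2 * ne ^ 2 - μ ^ 2 * c ^ 2 * nh ^ 2 := by
          ring
        have e3 : (a - μ * c) ^ 2 * nh ^ 2
            = a ^ 2 * nh ^ 2 - 2 * a * μ * c * nh ^ 2 + μ ^ 2 * c ^ 2 * nh ^ 2 := by ring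
        linarith
      have hfin : (a - μ * c) ^ 2 * nh ^ 2 ≤ σ ^ 2 * nh ^ 2 :=
        mul_le_mul_of_nonneg_right hsb (sq_nonneg nh)
      linarith

section DescentAux

variable {E : Type*} [NormedAddCommGroup E] [InnerProductSpace ℝ E] [CompleteSpace E]

lemma descent_lemma1 (f : E → ℝ) (L : ℝ) (hdiff : Differentiable ℝ f)
    (hlip : ∀ x y, ‖gradient f x - gradient f y‖ ≤ L * ‖x - y‖) :
    ∀ y z, f z ≤ f y + ⟪gradient f y, z - y⟫_ℝ + L / 2 * ‖z - y‖ ^ 2 := by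
  intro y z
  set c : ℝ → E := fun s => y + s • (z - y) with hc_def
  have hc : ∀ s : ℝ, HasDerivAt c (z - y) s := by
    intro s
    have : HasDerivAt (fun s : ℝ => s • (z - y)) ((1:ℝ) • (z - y)) s :=
      (hasDerivAt_id s).smul_const (z - y)
    have h2 := this.const_add y
    rw [one_smul] at h2
    exact h2
  have hg : ∀ s : ℝ, HasDerivAt (fun s => f (c s)) ⟪gradient f (c s), z - y⟫_ℝ s := by
    intro s
    have h1 := (hdiff (c s)).hasGradientAt.hasFDerivAt
    have := h1.comp_hasDerivAt s (hc s)
    simp at this ⊢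
    exact this
  set φ : ℝ → ℝ := fun s =>
    f (c s) - s * ⟪gradient f y, z - y⟫_ℝ - L / 2 * s ^ 2 * ‖z - y‖ ^ 2 with hφ_def
  have hφ' : ∀ s : ℝ, HasDerivAt φ
      (⟪gradient f (c s), z - y⟫_ℝ - ⟪gradient f y, z - y⟫_ℝ - L * s * ‖z - y‖ ^ 2) s := by
    intro s
    have h1 : HasDerivAt (fun s : ℝ => s * ⟪gradient f y, z - y⟫_ℝ)
        ⟪gradient f y, z - y⟫_ℝ s := by simpa using (hasDerivAt_id s).mul_const _
    have h2 : HasDerivAt (fun s : ℝ => L / 2 * s ^ 2 * ‖z - y‖ ^ 2)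
        (L * s * ‖z - y‖ ^ 2) s := by
      have := ((hasDerivAt_pow 2 s).const_mul (L / 2)).mul_const (‖z - y‖ ^ 2)
      exact this.congr_deriv (by push_cast; ring)
    exact ((hg s).sub h1).sub h2
  have hderiv : ∀ s ∈ interior (Set.Icc (0:ℝ) 1), deriv φ s ≤ 0 := by
    intro s hs
    rw [interior_Icc] at hs
    rw [(hφ' s).deriv]
    have hb : ⟪gradient f (c s) - gradient f y, z - y⟫_ℝ ≤ L * s * ‖z - y‖ ^ 2 := by
      calc ⟪gradient f (c s) - gradient f y, z - y⟫_ℝ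
          ≤ ‖gradient f (c s) - gradient f y‖ * ‖z - y‖ := real_inner_le_norm _ _
        _ ≤ (L * ‖c s - y‖) * ‖z - y‖ := by
            apply mul_le_mul_of_nonneg_right (hlip _ _) (norm_nonneg _)
        _ = L * s * ‖z - y‖ ^ 2 := by
            have : c s - y = s • (z - y) := by simp [hc_def]
            rw [this, norm_smul]
            simp [abs_of_nonneg hs.1.le]
            ring
    rw [inner_sub_left] at hb
    linarith
  have hanti : AntitoneOn φ (Set.Icc (0:ℝ) 1) := by
    apply antitoneOn_of_deriv_nonpos (convex_Icc 0 1)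
    · exact fun s _ => ((hφ' s).differentiableAt).continuousAt.continuousWithinAt
    · exact fun s _ => ((hφ' s).differentiableAt).differentiableWithinAt
    · exact hderiv
  have := hanti (Set.mem_Icc.mpr ⟨le_refl 0, zero_le_one⟩)
    (Set.mem_Icc.mpr ⟨zero_le_one, le_refl 1⟩) zero_le_one
  have hc0 : c 0 = y := by simp [hc_def]
  have hc1 : c 1 = z := by simp [hc_def]
  simp only [hφ_def, hc0, hc1] at this
  push_cast at this
  nlinarith [this]

end DescentAux

theorem stmt7 (n : ℕ) (f g : EuclideanSpace ℝ (Fin n) → ℝ) (m L μ : ℝ)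
    (hm : 0 < m) (hmL : m ≤ L) (hμ : 0 < μ) (hμL : μ < 2 / L)
    (hdiff : Differentiable ℝ f)
    (hsc : ∀ x y : EuclideanSpace ℝ (Fin n),
      f y ≥ f x + ⟪gradient f x, y - x⟫_ℝ + m / 2 * ‖y - x‖ ^ 2)
    (hlip : ∀ x y : EuclideanSpace ℝ (Fin n),
      ‖gradient f x - gradient f y‖ ≤ L * ‖x - y‖)
    (hg : ConvexOn ℝ Set.univ g)
    (P : EuclideanSpace ℝ (Fin n) → EuclideanSpace ℝ (Fin n))
    (hP : ∀ v : EuclideanSpace ℝ (Fin n),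
      IsMinOn (fun z => g z + 1 / (2 * μ) * ‖z - v‖ ^ 2) Set.univ (P v))
    (xstar : EuclideanSpace ℝ (Fin n))
    (hxstar : P (xstar - μ • gradient f xstar) = xstar)
    (x : ℝ → EuclideanSpace ℝ (Fin n)) (hx : Differentiable ℝ x)
    (hode : ∀ t : ℝ, 0 ≤ t →
      deriv x t = -(x t - P (x t - μ • gradient f (x t)))) :
    ∀ t : ℝ, 0 ≤ t →
      ‖x t - xstar‖ ≤
        Real.exp (-(1 - max |1 - μ * m| |1 - μ * L|) * t) * ‖x 0 - xstar‖ := by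
  set σ : ℝ := max |1 - μ * m| |1 - μ * L| with hσdef
  have hσ0 : 0 ≤ σ := le_trans (abs_nonneg _) (le_max_left _ _)
  -- contraction of the gradient step
  have hcontr : ∀ a b : EuclideanSpace ℝ (Fin n),
      ‖(a - μ • gradient f a) - (b - μ • gradient f b)‖ ≤ σ * ‖a - b‖ := by
    set f2 : EuclideanSpace ℝ (Fin n) → ℝ := fun z => f z - m / 2 * ‖z‖ ^ 2 with hf2
    set G2 : EuclideanSpace ℝ (Fin n) → EuclideanSpace ℝ (Fin n) := fun z => gradient f z - m • z with hG2
    have hdesc := descent_lemma1 f L hdiff hlip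
    have hinner : ∀ a b, ⟪G2 a, b - a⟫_ℝ
        = ⟪gradient f a, b - a⟫_ℝ - m * (⟪a, b⟫_ℝ - ‖a‖ ^ 2) := by
      intro a b
      simp only [hG2, inner_sub_left, real_inner_smul_left, inner_sub_right,
        real_inner_self_eq_norm_sq]
      try ring
    have hnsq : ∀ a b : EuclideanSpace ℝ (Fin n), ‖b - a‖ ^ 2 = ‖b‖ ^ 2 - 2 * ⟪a, b⟫_ℝ + ‖a‖ ^ 2 := by
      intro a b
      rw [@norm_sub_sq_real, real_inner_comm]
      try ring
    have h1' : ∀ a b, f2 a + ⟪G2 a, b - a⟫_ℝ ≤ f2 b := by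
      intro a b
      have hs := hsc a b
      simp only [hf2]
      rw [hinner a b]
      have e1 : m / 2 * ‖b - a‖ ^ 2
          = m / 2 * ‖b‖ ^ 2 - m * ⟪a, b⟫_ℝ + m / 2 * ‖a‖ ^ 2 := by
        rw [hnsq a b]; ring
      linarith
    have h2' : ∀ a b, f2 b ≤ f2 a + ⟪G2 a, b - a⟫_ℝ + (L - m) / 2 * ‖b - a‖ ^ 2 := by
      intro a b
      have hs := hdesc a b
      simp only [hf2]
      rw [hinner a b]
      have e1 : L / 2 * ‖b - a‖ ^ 2
          = L / 2 * ‖b‖ ^ 2 - L * ⟪a, b⟫_ℝ + L / 2 * ‖a‖ ^ 2 := by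
        rw [hnsq a b]; ring
      have e2 : (L - m) / 2 * ‖b - a‖ ^ 2 = (L - m) / 2 * ‖b‖ ^ 2
          - (L - m) * ⟪a, b⟫_ℝ + (L - m) / 2 * ‖a‖ ^ 2 := by
        rw [hnsq a b]; ring
      linarith
    have hco := coco_lemma1 f2 G2 (L - m) (by linarith) h1' h2'
    intro a b
    set h : EuclideanSpace ℝ (Fin n) := a - b with hh
    set d : EuclideanSpace ℝ (Fin n) := gradient f a - gradient f b with hd
    set e : EuclideanSpace ℝ (Fin n) := d - m • h with he
    have hee : G2 a - G2 b = e := by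
      simp only [hG2, he, hd, hh, smul_sub]
      abel
    have hco' : ‖e‖ ^ 2 ≤ (L - m) * ⟪e, h⟫_ℝ := by
      have := hco a b
      rw [hee] at this
      exact this
    have hvec : (a - μ • gradient f a) - (b - μ • gradient f b)
        = (1 - μ * m) • h - μ • e := by
      simp only [he, hd, hh, smul_sub, sub_smul, one_smul, smul_smul]
      try abel_nf
      try module
      try abel
    rw [hvec]
    have hexp : ‖(1 - μ * m) • h - μ • e‖ ^ 2
        = (1 - μ * m) ^ 2 * ‖h‖ ^ 2 - 2 * (1 - μ * m) * μ * ⟪e, h⟫_ℝ + μ ^ 2 * ‖e‖ ^ 2 := by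
      rw [@norm_sub_sq_real, norm_smul, norm_smul, real_inner_smul_left,
        real_inner_smul_right, Real.norm_eq_abs, Real.norm_eq_abs, mul_pow, mul_pow,
        sq_abs, sq_abs, real_inner_comm]
      ring
    have hkey := keyreal1 (1 - μ * m) μ (L - m) ‖e‖ ‖h‖ ⟪e, h⟫_ℝ hμ (by linarith)
      (norm_nonneg _) (norm_nonneg _) hco' (real_inner_le_norm e h)
      (neg_le_of_abs_le (abs_real_inner_le_norm e h))
    have hmax : max |1 - μ * m| |1 - μ * m - μ * (L - m)| = σ := by
      have : 1 - μ * m - μ * (L - m) = 1 - μ * L := by ring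
      rw [this, hσdef]
    rw [hmax] at hkey
    have hsq : ‖(1 - μ * m) • h - μ • e‖ ^ 2 ≤ (σ * ‖h‖) ^ 2 := by
      rw [hexp]
      calc (1 - μ * m) ^ 2 * ‖h‖ ^ 2 - 2 * (1 - μ * m) * μ * ⟪e, h⟫_ℝ + μ ^ 2 * ‖e‖ ^ 2
          ≤ σ ^ 2 * ‖h‖ ^ 2 := hkey
        _ = (σ * ‖h‖) ^ 2 := by ring
    exact le_of_pow_le_pow_left₀ two_ne_zero (mul_nonneg hσ0 (norm_nonneg _)) hsq
  have hnon := prox_nonexpansive1 g μ hμ hg P hP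
  -- Gronwall argument
  set ρ : ℝ := 1 - σ with hρdef
  set y : ℝ → EuclideanSpace ℝ (Fin n) := fun t => x t - xstar with hy
  have hy' : ∀ t, HasDerivAt y (deriv x t) t := by
    intro t
    exact ((hx t).hasDerivAt).sub_const xstar
  set φ : ℝ → ℝ := fun t => ⟪y t, y t⟫_ℝ with hφ
  have hφ' : ∀ t, HasDerivAt φ (2 * ⟪y t, deriv x t⟫_ℝ) t := by
    intro t
    have h1 := (hy' t).inner ℝ (hy' t)
    have h2 : 2 * ⟪y t, deriv x t⟫_ℝ
        = ⟪y t, deriv x t⟫_ℝ + ⟪deriv x t, y t⟫_ℝ := by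
      rw [real_inner_comm (deriv x t) (y t)]; ring
    rw [h2]
    exact h1
  set w : ℝ → ℝ := fun t => φ t * Real.exp (2 * ρ * t) with hw
  have hw' : ∀ t, HasDerivAt w
      (2 * ⟪y t, deriv x t⟫_ℝ * Real.exp (2 * ρ * t)
        + φ t * (Real.exp (2 * ρ * t) * (2 * ρ))) t := by
    intro t
    have h0 : HasDerivAt (fun t : ℝ => 2 * ρ * t) (2 * ρ) t := by
      simpa using (hasDerivAt_id t).const_mul (2 * ρ)
    exact (hφ' t).mul h0.exp
  have hφnorm : ∀ t, φ t = ‖y t‖ ^ 2 := fun t => real_inner_self_eq_norm_sq _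
  have hanti : AntitoneOn w (Set.Ici (0:ℝ)) := by
    apply antitoneOn_of_deriv_nonpos (convex_Ici 0)
    · exact fun t _ => ((hw' t).differentiableAt).continuousAt.continuousWithinAt
    · exact fun t _ => ((hw' t).differentiableAt).differentiableWithinAt
    · intro t ht
      rw [interior_Ici] at ht
      have ht0 : (0:ℝ) ≤ t := le_of_lt ht
      rw [(hw' t).deriv]
      have hb : ⟪y t, deriv x t⟫_ℝ ≤ -ρ * φ t := by
        rw [hode t ht0]
        have hrwv : -(x t - P (x t - μ • gradient f (x t)))
            = -(y t) + (P (x t - μ • gradient f (x t))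
                - P (xstar - μ • gradient f xstar)) := by
          rw [hxstar]
          simp only [hy]
          abel
        rw [hrwv, inner_add_right, inner_neg_right, real_inner_self_eq_norm_sq]
        have hPP : ‖P (x t - μ • gradient f (x t)) - P (xstar - μ • gradient f xstar)‖
            ≤ ‖(x t - μ • gradient f (x t)) - (xstar - μ • gradient f xstar)‖ :=
          hnon _ _
        have hGG := hcontr (x t) xstar
        have hCS := real_inner_le_norm (y t)
          (P (x t - μ • gradient f (x t)) - P (xstar - μ • gradient f xstar))
        have hyn : ‖y t‖ = ‖x t - xstar‖ := by rw [hy]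
        have hφt := hφnorm t
        nlinarith [norm_nonneg (y t), norm_nonneg
          (P (x t - μ • gradient f (x t)) - P (xstar - μ • gradient f xstar))]
      have hexpos := Real.exp_pos (2 * ρ * t)
      have h1 : 2 * ⟪y t, deriv x t⟫_ℝ + φ t * (2 * ρ) ≤ 0 := by linarith
      calc 2 * ⟪y t, deriv x t⟫_ℝ * Real.exp (2 * ρ * t)
            + φ t * (Real.exp (2 * ρ * t) * (2 * ρ))
          = Real.exp (2 * ρ * t) * (2 * ⟪y t, deriv x t⟫_ℝ + φ t * (2 * ρ)) := by ring
        _ ≤ 0 := mul_nonpos_of_nonneg_of_nonpos hexpos.le h1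
  intro t ht
  have hwle : w t ≤ w 0 := hanti (Set.mem_Ici.mpr le_rfl) (Set.mem_Ici.mpr ht) ht
  have hw0 : w 0 = φ 0 := by simp [hw]
  have hwt : w t = φ t * Real.exp (2 * ρ * t) := rfl
  have hφle : φ t ≤ φ 0 * Real.exp (-(2 * ρ * t)) := by
    have hexpos := Real.exp_pos (2 * ρ * t)
    have h2 : φ t * Real.exp (2 * ρ * t) ≤ φ 0 := by rw [← hwt, ← hw0]; exact hwle
    have h3 := mul_le_mul_of_nonneg_right h2 (Real.exp_pos (-(2 * ρ * t))).le
    calc φ t = φ t * (Real.exp (2 * ρ * t) * Real.exp (-(2 * ρ * t))) := by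
          rw [← Real.exp_add]
          simp
      _ = φ t * Real.exp (2 * ρ * t) * Real.exp (-(2 * ρ * t)) := by ring
      _ ≤ φ 0 * Real.exp (-(2 * ρ * t)) := h3
  have hgoalsq : ‖x t - xstar‖ ^ 2 ≤ (Real.exp (-ρ * t) * ‖x 0 - xstar‖) ^ 2 := by
    have e1 : (Real.exp (-ρ * t) * ‖x 0 - xstar‖) ^ 2
        = Real.exp (-(2 * ρ * t)) * ‖x 0 - xstar‖ ^ 2 := by
      rw [mul_pow, sq, ← Real.exp_add]
      ring_nf
    rw [e1]
    have := hφle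
    rw [hφnorm t, hφnorm 0] at this
    simpa [hy] using this.trans_eq (by ring)
  have hfin := le_of_pow_le_pow_left₀ two_ne_zero
    (mul_nonneg (Real.exp_pos _).le (norm_nonneg _)) hgoalsq
  exact hfin
end

section
/- Let f be m-strongly convex with L-Lipschitz gradient and 0 < μ < 2/L. Then the reflected proximal operator R_{μf} = 2 prox_{μf} − I is σ-contractive with σ = max(|1−μm|,|1−μL|) < 1: ‖R_{μf}(x) − R_{μf}(y)‖ ≤ σ‖x − y‖. -/
set_option maxHeartbeats 1000000

open InnerProductSpace intervalIntegral

lemma key_ineq (m L μ a b c σ : ℝ) (hm : 0 < m) (hmL : m ≤ L) (hμ : 0 < μ)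
    (ha : 0 ≤ a) (hc : 0 ≤ c) (hcs : b ^ 2 ≤ a * c)
    (hint : m * L * a + c ≤ (m + L) * b)
    (hσ1 : |1 - μ * m| ≤ σ) (hσ2 : |1 - μ * L| ≤ σ) :
    a - 2 * μ * b + μ ^ 2 * c ≤ σ ^ 2 * (a + 2 * μ * b + μ ^ 2 * c) := by
  have hL : 0 < L := lt_of_lt_of_le hm hmL
  have hσ0 : 0 ≤ σ := le_trans (abs_nonneg _) hσ1
  have hsm : (1 - μ * m) ^ 2 ≤ σ ^ 2 := by
    have h := sq_abs (1 - μ * m)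
    nlinarith [pow_le_pow_left₀ (abs_nonneg (1 - μ*m)) hσ1 2]
  have hsL : (1 - μ * L) ^ 2 ≤ σ ^ 2 := by
    have h := sq_abs (1 - μ * L)
    nlinarith [pow_le_pow_left₀ (abs_nonneg (1 - μ*L)) hσ2 2]
  have hE1 : 0 ≤ σ^2 * (1 + μ*m)^2 - (1 - μ*m)^2 := by
    nlinarith [mul_nonneg (sq_nonneg σ) (show (0:ℝ) ≤ 2*(μ*m)+(μ*m)^2 by positivity)]
  have hE2 : 0 ≤ σ^2 * (1 + μ*L)^2 - (1 - μ*L)^2 := by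
    nlinarith [mul_nonneg (sq_nonneg σ) (show (0:ℝ) ≤ 2*(μ*L)+(μ*L)^2 by positivity)]
  have hb : 0 ≤ b := by nlinarith [mul_nonneg (mul_nonneg hm.le hL.le) ha]
  have hcoef : (0:ℝ) ≤ 2*μ*(1+σ^2) := by positivity
  by_cases ha0 : a = 0
  · subst ha0
    have hb0 : b = 0 := by nlinarith [sq_nonneg b]
    have hc0 : c = 0 := by nlinarith
    simp [hb0, hc0]
  have hapos : 0 < a := lt_of_le_of_ne ha (Ne.symm ha0)
  have hK : (c - m^2*a) * (c - L^2*a) ≤ 0 := by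
    have hq1 : (m*L*a + c)^2 ≤ ((m+L)*b)^2 :=
      pow_le_pow_left₀ (by positivity) hint 2
    have hq2 : (m+L)^2 * b^2 ≤ (m+L)^2 * (a*c) :=
      mul_le_mul_of_nonneg_left hcs (sq_nonneg (m+L))
    have e : (c - m^2*a) * (c - L^2*a) = (m*L*a+c)^2 - (m+L)^2*(a*c) := by ring
    have e2 : ((m+L)*b)^2 = (m+L)^2 * b^2 := by ring
    linarith
  have hm2L2 : m^2*a ≤ L^2*a :=
    mul_le_mul_of_nonneg_right (pow_le_pow_left₀ hm.le hmL 2) ha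
  have h2 : m^2*a ≤ c := by
    by_contra hcon
    push_neg at hcon
    have hl : 0 < m^2*a - c := by linarith
    have hl2 : 0 < L^2*a - c := by linarith
    nlinarith [mul_pos hl hl2]
  have h1 : c ≤ L^2*a := by
    by_contra hcon
    push_neg at hcon
    have hl : 0 < c - L^2*a := by linarith
    have hl2 : 0 < c - m^2*a := by linarith
    nlinarith [mul_pos hl2 hl]
  have step1 : 2*μ*(1+σ^2)*(m*L*a+c) ≤ 2*μ*(1+σ^2)*((m+L)*b) :=
    mul_le_mul_of_nonneg_left hint hcoef
  set H : ℝ := (m+L)*(σ^2-1)*(a+μ^2*c) + 2*μ*(1+σ^2)*(m*L*a+c) with hH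
  have hiden : (L^2*a - m^2*a) * H
      = (L^2*a - c)*(a*(m+L)*(σ^2*(1+μ*m)^2-(1-μ*m)^2))
        + (c - m^2*a)*(a*(m+L)*(σ^2*(1+μ*L)^2-(1-μ*L)^2)) := by rw [hH]; ring
  rcases eq_or_lt_of_le hmL with hmeq | hmlt
  · subst hmeq
    have hceq : c = m^2*a := le_antisymm h1 h2
    have hba : m*a ≤ b := by nlinarith
    subst hceq
    nlinarith [mul_nonneg ha hE1, mul_le_mul_of_nonneg_left hba hcoef]
  · have hHpos : 0 ≤ H := by
      have hr : 0 ≤ (L^2*a - m^2*a) * H := by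
        rw [hiden]
        have := mul_nonneg (mul_nonneg ha (by positivity : (0:ℝ) ≤ m + L)) hE1
        have := mul_nonneg (mul_nonneg ha (by positivity : (0:ℝ) ≤ m + L)) hE2
        nlinarith [mul_nonneg (sub_nonneg.mpr h1) (mul_nonneg (mul_nonneg ha (by positivity : (0:ℝ) ≤ m + L)) hE1),
          mul_nonneg (sub_nonneg.mpr h2) (mul_nonneg (mul_nonneg ha (by positivity : (0:ℝ) ≤ m + L)) hE2)]
      have hpos : 0 < L^2*a - m^2*a := by
        have h := mul_pos (mul_pos (by linarith : (0:ℝ) < L - m)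
          (by linarith : (0:ℝ) < L + m)) hapos
        nlinarith [h]
      exact nonneg_of_mul_nonneg_right (by linarith [hr]) hpos
    nlinarith [step1, hHpos]

lemma descent {n : ℕ} (f : EuclideanSpace ℝ (Fin n) → ℝ) (L : ℝ) (hL : 0 ≤ L)
    (hdiff : Differentiable ℝ f)
    (hlip : ∀ x y : EuclideanSpace ℝ (Fin n),
      ‖gradient f x - gradient f y‖ ≤ L * ‖x - y‖)
    (x y : EuclideanSpace ℝ (Fin n)) :
    f y ≤ f x + ⟪gradient f x, y - x⟫_ℝ + L / 2 * ‖y - x‖ ^ 2 := by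
  set u := y - x with hu
  have hgc : Continuous (gradient f) := by
    have : LipschitzWith (Real.toNNReal L) (gradient f) := by
      apply LipschitzWith.of_dist_le_mul
      intro a b
      rw [dist_eq_norm, dist_eq_norm]
      calc ‖gradient f a - gradient f b‖ ≤ L * ‖a - b‖ := hlip a b
        _ ≤ Real.toNNReal L * ‖a - b‖ := by
            apply mul_le_mul_of_nonneg_right _ (norm_nonneg _)
            rw [Real.coe_toNNReal L hL]
    exact this.continuous
  have hF : ∀ t : ℝ, HasDerivAt (fun s : ℝ => f (x + s • u))
      (⟪gradient f (x + t • u), u⟫_ℝ) t := by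
    intro t
    have hc : HasDerivAt (fun s : ℝ => x + s • u) u t := by
      have h1 : HasDerivAt (fun s : ℝ => s • u) ((1:ℝ) • u) t :=
        (hasDerivAt_id t).smul_const u
      simpa using h1.const_add x
    have hf : HasFDerivAt f (toDual ℝ _ (gradient f (x + t • u))) (x + t • u) :=
      (hdiff (x + t • u)).hasGradientAt.hasFDerivAt
    have := hf.comp_hasDerivAt t hc
    simpa [toDual_apply_apply, Function.comp_def] using this
  have hcont : Continuous fun t : ℝ => ⟪gradient f (x + t • u), u⟫_ℝ := by
    apply Continuous.inner
    · exact hgc.comp (by continuity)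
    · exact continuous_const
  have heq : f y - f x = ∫ t in (0:ℝ)..1, ⟪gradient f (x + t • u), u⟫_ℝ := by
    have h := integral_eq_sub_of_hasDerivAt (f := fun s : ℝ => f (x + s • u))
      (fun t _ => hF t) (hcont.intervalIntegrable 0 1)
    rw [h]
    norm_num [hu]
  have hbound : ∫ t in (0:ℝ)..1, ⟪gradient f (x + t • u), u⟫_ℝ
      ≤ ∫ t in (0:ℝ)..1, (⟪gradient f x, u⟫_ℝ + (L * ‖u‖ ^ 2) * t) := by
    apply integral_mono_on (by norm_num) (hcont.intervalIntegrable 0 1)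
      ((by continuity : Continuous fun t : ℝ => ⟪gradient f x, u⟫_ℝ + (L * ‖u‖ ^ 2) * t).intervalIntegrable 0 1)
    intro t ht
    have h1 : ⟪gradient f (x + t • u) - gradient f x, u⟫_ℝ ≤ L * t * ‖u‖ ^ 2 := by
      calc ⟪gradient f (x + t • u) - gradient f x, u⟫_ℝ
          ≤ ‖gradient f (x + t • u) - gradient f x‖ * ‖u‖ := real_inner_le_norm _ _
        _ ≤ (L * ‖(x + t • u) - x‖) * ‖u‖ :=
            mul_le_mul_of_nonneg_right (hlip _ _) (norm_nonneg _)
        _ = L * t * ‖u‖ ^ 2 := by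
            rw [add_sub_cancel_left, norm_smul, Real.norm_eq_abs, abs_of_nonneg ht.1]
            ring
    have h2 : ⟪gradient f (x + t • u), u⟫_ℝ
        = ⟪gradient f x, u⟫_ℝ + ⟪gradient f (x + t • u) - gradient f x, u⟫_ℝ := by
      rw [inner_sub_left]; ring
    rw [h2]; linarith
  have hval : ∫ t in (0:ℝ)..1, (⟪gradient f x, u⟫_ℝ + (L * ‖u‖ ^ 2) * t)
      = ⟪gradient f x, u⟫_ℝ + L / 2 * ‖u‖ ^ 2 := by
    rw [integral_add (intervalIntegrable_const)
      ((by continuity : Continuous fun t : ℝ => (L * ‖u‖ ^ 2) * t).intervalIntegrable 0 1)]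
    rw [integral_const_mul, integral_id, integral_const]
    norm_num
    ring
  linarith [heq, hbound, hval]

lemma interp {n : ℕ} (f : EuclideanSpace ℝ (Fin n) → ℝ) (m L : ℝ)
    (hm : 0 < m) (hmL : m ≤ L)
    (hdiff : Differentiable ℝ f)
    (hsc : ∀ x y : EuclideanSpace ℝ (Fin n),
      f y ≥ f x + ⟪gradient f x, y - x⟫_ℝ + m / 2 * ‖y - x‖ ^ 2)
    (hlip : ∀ x y : EuclideanSpace ℝ (Fin n),
      ‖gradient f x - gradient f y‖ ≤ L * ‖x - y‖)
    (x y : EuclideanSpace ℝ (Fin n)) :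
    m * L * ‖y - x‖ ^ 2 + ‖gradient f y - gradient f x‖ ^ 2
      ≤ (m + L) * ⟪gradient f y - gradient f x, y - x⟫_ℝ := by
  have hL : 0 < L := lt_of_lt_of_le hm hmL
  set g := gradient f with hg
  have mono : ∀ p q : EuclideanSpace ℝ (Fin n),
      m * ‖q - p‖ ^ 2 ≤ ⟪g q - g p, q - p⟫_ℝ := by
    intro p q
    have h1 := hsc p q
    have h2 := hsc q p
    have e1 : ⟪g q - g p, q - p⟫_ℝ = ⟪g q, q - p⟫_ℝ - ⟪g p, q - p⟫_ℝ :=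
      inner_sub_left _ _ _
    have e2 : ⟪g q, p - q⟫_ℝ = -⟪g q, q - p⟫_ℝ := by
      rw [show p - q = -(q - p) by abel, inner_neg_right]
    have e3 : ‖p - q‖ = ‖q - p‖ := norm_sub_rev _ _
    rw [e3] at h2
    rw [e2] at h2
    linarith
  rcases eq_or_lt_of_le hmL with hmeq | hmlt
  · -- m = L
    subst hmeq
    have hw : ‖g y - g x‖ ≤ m * ‖y - x‖ := hlip y x
    have hw2 : ‖g y - g x‖ ^ 2 ≤ (m * ‖y - x‖) ^ 2 :=
      pow_le_pow_left₀ (norm_nonneg _) hw 2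
    have hmono := mono x y
    nlinarith [mul_le_mul_of_nonneg_left hmono (by linarith : (0:ℝ) ≤ 2 * m)]
  · -- m < L
    set k : ℝ := (L - m)⁻¹ with hkdef
    have hKpos : (0:ℝ) < L - m := by linarith
    have hk : 0 < k := inv_pos.mpr hKpos
    have hKk : (L - m) * k = 1 := mul_inv_cancel₀ (ne_of_gt hKpos)
    have claim : ∀ p q : EuclideanSpace ℝ (Fin n),
        f p + ⟪g p, q - p⟫_ℝ + m / 2 * ‖q - p‖ ^ 2
          + k / 2 * ‖(g q - g p) - m • (q - p)‖ ^ 2 ≤ f q := by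
      intro p q
      set u : EuclideanSpace ℝ (Fin n) := q - p with hu
      set d : EuclideanSpace ℝ (Fin n) := (g q - g p) - m • u with hd
      set z : EuclideanSpace ℝ (Fin n) := q - k • d with hz
      have h1 := hsc p z
      have h2 := descent f L hL.le hdiff hlip q z
      have ezx : z - p = u - k • d := by rw [hz, hu]; abel
      have ezy : z - q = -(k • d) := by rw [hz]; abel
      have i1 : ⟪g p, z - p⟫_ℝ = ⟪g p, u⟫_ℝ - k * ⟪g p, d⟫_ℝ := by
        rw [ezx, inner_sub_right, real_inner_smul_right]
      have i2 : ‖z - p‖ ^ 2 = ‖u‖ ^ 2 - 2 * (k * ⟪u, d⟫_ℝ) + k^2 * ‖d‖ ^ 2 := by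
        rw [ezx, norm_sub_sq_real, real_inner_smul_right, norm_smul,
          Real.norm_eq_abs, mul_pow, sq_abs]
      have i3 : ⟪g q, z - q⟫_ℝ = -(k * ⟪g q, d⟫_ℝ) := by
        rw [ezy, inner_neg_right, real_inner_smul_right]
      have i4 : ‖z - q‖ ^ 2 = k^2 * ‖d‖ ^ 2 := by
        rw [ezy, norm_neg, norm_smul, Real.norm_eq_abs, mul_pow, sq_abs]
      have hE : ‖d‖ ^ 2 = ⟪g q, d⟫_ℝ - ⟪g p, d⟫_ℝ - m * ⟪u, d⟫_ℝ := by
        have e : ‖d‖ ^ 2 = ⟪d, d⟫_ℝ := (real_inner_self_eq_norm_sq d).symm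
        rw [e]
        nth_rewrite 1 [hd]
        rw [inner_sub_left, inner_sub_left, real_inner_smul_left]
      rw [i1, i2] at h1
      rw [i3, i4] at h2
      have p1 : k * (⟪g q, d⟫_ℝ - ⟪g p, d⟫_ℝ - m * ⟪u, d⟫_ℝ) = k * ‖d‖ ^ 2 := by
        rw [← hE]
      have p2 : (L - m) * (k^2 * ‖d‖ ^ 2) = k * ‖d‖ ^ 2 := by
        rw [show (L - m) * (k^2 * ‖d‖ ^ 2) = ((L - m) * k) * (k * ‖d‖ ^ 2) by ring,
          hKk, one_mul]
      nlinarith [h1, h2, p1, p2]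
    have c1 := claim x y
    have c2 := claim y x
    have hdneg : (g x - g y) - m • (x - y) = -((g y - g x) - m • (y - x)) := by
      module
    rw [hdneg, norm_neg] at c2
    have e2 : ⟪g y, x - y⟫_ℝ = -⟪g y, y - x⟫_ℝ := by
      rw [show x - y = -(y - x) by abel, inner_neg_right]
    have e3 : ‖x - y‖ = ‖y - x‖ := norm_sub_rev _ _
    rw [e2, e3] at c2
    have hsum : ⟪g y, y - x⟫_ℝ - ⟪g x, y - x⟫_ℝ
        ≥ m * ‖y - x‖ ^ 2 + k * ‖(g y - g x) - m • (y - x)‖ ^ 2 := by linarith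
    have hwu : ⟪g y - g x, y - x⟫_ℝ = ⟪g y, y - x⟫_ℝ - ⟪g x, y - x⟫_ℝ :=
      inner_sub_left _ _ _
    have hd2 : ‖(g y - g x) - m • (y - x)‖ ^ 2
        = ‖g y - g x‖ ^ 2 - 2 * (m * ⟪g y - g x, y - x⟫_ℝ) + m^2 * ‖y - x‖ ^ 2 := by
      rw [norm_sub_sq_real, real_inner_smul_right, norm_smul,
        Real.norm_eq_abs, mul_pow, sq_abs]
    have h5 : (L - m) * (k * ‖(g y - g x) - m • (y - x)‖ ^ 2)
        ≤ (L - m) * (⟪g y - g x, y - x⟫_ℝ - m * ‖y - x‖ ^ 2) := by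
      apply mul_le_mul_of_nonneg_left _ hKpos.le
      rw [hwu]; linarith
    have h6 : (L - m) * (k * ‖(g y - g x) - m • (y - x)‖ ^ 2)
        = ‖(g y - g x) - m • (y - x)‖ ^ 2 := by
      rw [show (L - m) * (k * ‖(g y - g x) - m • (y - x)‖ ^ 2)
        = ((L - m) * k) * ‖(g y - g x) - m • (y - x)‖ ^ 2 by ring, hKk, one_mul]
    nlinarith [h5, h6, hd2]

theorem stmt12 (n : ℕ) (f : EuclideanSpace ℝ (Fin n) → ℝ) (m L μ : ℝ)
    (hm : 0 < m) (hmL : m ≤ L) (hμ : 0 < μ) (hμL : μ < 2 / L)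
    (hdiff : Differentiable ℝ f)
    (hsc : ∀ x y : EuclideanSpace ℝ (Fin n),
      f y ≥ f x + ⟪gradient f x, y - x⟫_ℝ + m / 2 * ‖y - x‖ ^ 2)
    (hlip : ∀ x y : EuclideanSpace ℝ (Fin n),
      ‖gradient f x - gradient f y‖ ≤ L * ‖x - y‖)
    (P : EuclideanSpace ℝ (Fin n) → EuclideanSpace ℝ (Fin n))
    (hP : ∀ v : EuclideanSpace ℝ (Fin n), P v + μ • gradient f (P v) = v) :
    (∀ x y : EuclideanSpace ℝ (Fin n),
      ‖((2 : ℝ) • P x - x) - ((2 : ℝ) • P y - y)‖ ≤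
        max |1 - μ * m| |1 - μ * L| * ‖x - y‖) ∧
    max |1 - μ * m| |1 - μ * L| < 1 := by
  have hL : 0 < L := lt_of_lt_of_le hm hmL
  have hμL2 : μ * L < 2 := (lt_div_iff₀ hL).mp hμL
  have hμm : 0 < μ * m := mul_pos hμ hm
  have hμm2 : μ * m ≤ μ * L := mul_le_mul_of_nonneg_left hmL hμ.le
  set σ : ℝ := max |1 - μ * m| |1 - μ * L| with hσdef
  have hσ1 : |1 - μ * m| ≤ σ := le_max_left _ _
  have hσ2 : |1 - μ * L| ≤ σ := le_max_right _ _
  have hσ0 : 0 ≤ σ := le_trans (abs_nonneg _) hσ1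
  have hσlt : σ < 1 := by
    apply max_lt
    · rw [abs_lt]; constructor <;> nlinarith [mul_pos hμ hL]
    · rw [abs_lt]; constructor <;> nlinarith [mul_pos hμ hL]
  refine ⟨?_, hσlt⟩
  intro x y
  set u : EuclideanSpace ℝ (Fin n) := P x - P y with hu
  set w : EuclideanSpace ℝ (Fin n) :=
    gradient f (P x) - gradient f (P y) with hw
  have hxy : x - y = u + μ • w := by
    conv_lhs => rw [← hP x, ← hP y]
    rw [hu, hw]; module
  have hR : ((2:ℝ) • P x - x) - ((2:ℝ) • P y - y) = u - μ • w := by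
    have e : ((2:ℝ) • P x - x) - ((2:ℝ) • P y - y) = (2:ℝ) • u - (x - y) := by
      rw [hu]; module
    rw [e, hxy]; module
  have hint := interp f m L hm hmL hdiff hsc hlip (P y) (P x)
  have hcs : ⟪w, u⟫_ℝ ^ 2 ≤ ‖u‖ ^ 2 * ‖w‖ ^ 2 := by
    have h := real_inner_mul_inner_self_le w u
    rw [real_inner_self_eq_norm_sq, real_inner_self_eq_norm_sq] at h
    nlinarith [h]
  have hkey := key_ineq m L μ (‖u‖^2) (⟪w, u⟫_ℝ) (‖w‖^2) σ hm hmL hμ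
    (by positivity) (by positivity) hcs (by exact_mod_cast hint) hσ1 hσ2
  have eminus : ‖u - μ • w‖ ^ 2 = ‖u‖^2 - 2*μ*⟪w, u⟫_ℝ + μ^2*‖w‖^2 := by
    rw [norm_sub_sq_real, real_inner_smul_right, norm_smul, Real.norm_eq_abs,
      mul_pow, sq_abs, real_inner_comm u w]
    ring
  have eplus : ‖u + μ • w‖ ^ 2 = ‖u‖^2 + 2*μ*⟪w, u⟫_ℝ + μ^2*‖w‖^2 := by
    rw [norm_add_sq_real, real_inner_smul_right, norm_smul, Real.norm_eq_abs,
      mul_pow, sq_abs, real_inner_comm u w]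
    ring
  have hfin : ‖u - μ • w‖ ^ 2 ≤ (σ * ‖x - y‖) ^ 2 := by
    rw [eminus]
    calc ‖u‖^2 - 2*μ*⟪w, u⟫_ℝ + μ^2*‖w‖^2
        ≤ σ^2 * (‖u‖^2 + 2*μ*⟪w, u⟫_ℝ + μ^2*‖w‖^2) := hkey
      _ = σ^2 * ‖u + μ • w‖^2 := by rw [eplus]
      _ = (σ * ‖u + μ • w‖)^2 := by ring
      _ = (σ * ‖x - y‖)^2 := by rw [hxy]
  rw [hR]
  have hs := Real.sqrt_le_sqrt hfin
  rwa [Real.sqrt_sq (norm_nonneg _), Real.sqrt_sq (by positivity)] at hs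
end

section
/- Let f be m-strongly convex with L-Lipschitz gradient, g proper closed convex, 0 < μ < 2/L. Then the Douglas–Rachford operator R_{μg} ∘ R_{μf} is σ-contractive with σ = max(|1−μm|,|1−μL|) < 1, and hence has a unique fixed point. -/
open InnerProductSpace

section Aux

variable {E : Type*} [NormedAddCommGroup E] [InnerProductSpace ℝ E]

lemma stmt13_descent [CompleteSpace E]
    (f : E → ℝ) (L : ℝ) (hL : 0 ≤ L) (hdiff : Differentiable ℝ f)
    (hlip : ∀ x y : E, ‖gradient f x - gradient f y‖ ≤ L * ‖x - y‖) (x y : E) :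
    f y ≤ f x + ⟪gradient f x, y - x⟫_ℝ + L / 2 * ‖y - x‖ ^ 2 := by
  set w := y - x with hw
  set c : ℝ → E := fun t => x + t • w with hc
  have hcont : Continuous fun z => gradient f z := by
    refine (LipschitzWith.of_dist_le_mul (K := ⟨L, hL⟩) ?_).continuous
    intro a b
    rw [dist_eq_norm, dist_eq_norm]; exact hlip a b
  set G : ℝ → ℝ := fun t => ⟪gradient f (c t), w⟫_ℝ with hG
  have hcderiv : ∀ t : ℝ, HasDerivAt c w t := by
    intro t
    simpa [hc] using ((hasDerivAt_id t).smul_const w).const_add x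
  have hderiv : ∀ t : ℝ, HasDerivAt (fun t => f (c t)) (G t) t := by
    intro t
    have h1 : HasFDerivAt f (toDual ℝ E (gradient f (c t))) (c t) :=
      (hdiff (c t)).hasGradientAt.hasFDerivAt
    have := h1.comp_hasDerivAt t (hcderiv t)
    rw [toDual_apply_apply] at this; exact this
  have hGcont : Continuous G := by
    exact (hcont.comp (continuous_const.add (continuous_id.smul continuous_const))).inner
      continuous_const
  have hint : ∫ t in (0:ℝ)..1, G t = f (c 1) - f (c 0) := by
    refine intervalIntegral.integral_eq_sub_of_hasDerivAt (fun t _ => hderiv t) ?_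
    exact hGcont.intervalIntegrable 0 1
  have hc0 : c 0 = x := by simp [hc]
  have hc1 : c 1 = y := by simp [hc, hw]
  have hmono : ∫ t in (0:ℝ)..1, G t ≤ ∫ t in (0:ℝ)..1, (G 0 + L * t * ‖w‖ ^ 2) := by
    refine intervalIntegral.integral_mono_on (by norm_num) (hGcont.intervalIntegrable 0 1)
      ((continuous_const.add ((continuous_const.mul continuous_id).mul
        continuous_const)).intervalIntegrable 0 1) ?_
    intro t ht
    have h2 : G t - G 0 = ⟪gradient f (c t) - gradient f (c 0), w⟫_ℝ := by
      simp [hG, inner_sub_left]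
    have h3 : ⟪gradient f (c t) - gradient f (c 0), w⟫_ℝ ≤ L * t * ‖w‖ ^ 2 := by
      calc ⟪gradient f (c t) - gradient f (c 0), w⟫_ℝ
          ≤ ‖gradient f (c t) - gradient f (c 0)‖ * ‖w‖ := real_inner_le_norm _ _
        _ ≤ (L * ‖c t - c 0‖) * ‖w‖ := by
            have := hlip (c t) (c 0)
            exact mul_le_mul_of_nonneg_right this (norm_nonneg _)
        _ = L * t * ‖w‖ ^ 2 := by
            have : c t - c 0 = t • w := by simp [hc]
            rw [this, norm_smul]
            rw [Real.norm_eq_abs, abs_of_nonneg ht.1]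
            ring
    linarith [h2, h3]
  have hval : ∫ t in (0:ℝ)..1, (G 0 + L * t * ‖w‖ ^ 2) = G 0 + L / 2 * ‖w‖ ^ 2 := by
    have heq : ∀ t : ℝ, G 0 + L * t * ‖w‖ ^ 2 = G 0 + (L * ‖w‖ ^ 2) * t := fun t => by ring
    simp_rw [heq]
    rw [intervalIntegral.integral_add intervalIntegrable_const
      ((by exact (continuous_const.mul continuous_id).intervalIntegrable 0 1 :
        IntervalIntegrable (fun t : ℝ => L * ‖w‖ ^ 2 * t) MeasureTheory.volume 0 1)),
      intervalIntegral.integral_const_mul, integral_id, intervalIntegral.integral_const]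
    norm_num
    ring
  have hG0 : G 0 = ⟪gradient f x, w⟫_ℝ := by rw [hG]; simp [hc0]
  rw [hint, hc0, hc1] at hmono
  rw [hval, hG0] at hmono
  linarith

lemma stmt13_prox_subgrad
    (g : E → ℝ) (hg : ConvexOn ℝ Set.univ g) (c : ℝ) (hc : 0 < c) (v u : E)
    (hu : IsMinOn (fun z => g z + c * ‖z - v‖ ^ 2) Set.univ u) (z : E) :
    g u + 2 * c * ⟪v - u, z - u⟫_ℝ ≤ g z := by
  set A : ℝ := g z - g u + 2 * c * ⟪u - v, z - u⟫_ℝ with hA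
  set B : ℝ := c * ‖z - u‖ ^ 2 with hB
  have hB0 : 0 ≤ B := by positivity
  have key : ∀ t : ℝ, 0 < t → t ≤ 1 → 0 ≤ A + t * B := by
    intro t ht0 ht1
    have hmin := hu (Set.mem_univ (u + t • (z - u)))
    simp only [Set.mem_univ] at hmin
    have hcomb : u + t • (z - u) = (1 - t) • u + t • z := by
      rw [smul_sub, sub_smul, one_smul]; abel
    have hconv : g (u + t • (z - u)) ≤ (1 - t) * g u + t * g z := by
      rw [hcomb]
      exact hg.2 (Set.mem_univ u) (Set.mem_univ z) (by linarith) (le_of_lt ht0) (by ring)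
    have hnorm : ‖u + t • (z - u) - v‖ ^ 2
        = ‖u - v‖ ^ 2 + 2 * t * ⟪u - v, z - u⟫_ℝ + t ^ 2 * ‖z - u‖ ^ 2 := by
      have : u + t • (z - u) - v = (u - v) + t • (z - u) := by abel
      rw [this, norm_add_sq_real, real_inner_smul_right, norm_smul]
      rw [Real.norm_eq_abs, mul_pow, sq_abs]
      ring
    have hmin' : g u + c * ‖u - v‖ ^ 2
        ≤ g (u + t • (z - u)) + c * ‖u + t • (z - u) - v‖ ^ 2 := hmin
    rw [hnorm] at hmin'
    have h2 : g u + c * ‖u - v‖ ^ 2 ≤ (1 - t) * g u + t * g z + c * ‖u - v‖ ^ 2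
        + 2 * c * t * ⟪u - v, z - u⟫_ℝ + c * t ^ 2 * ‖z - u‖ ^ 2 := by
      nlinarith [hconv, hmin']
    have h3 : 0 ≤ t * A + t ^ 2 * B := by rw [hA, hB]; nlinarith [h2]
    nlinarith [h3, ht0, ht1, mul_pos ht0 ht0]
  have hA0 : 0 ≤ A := by
    by_contra hneg
    push_neg at hneg
    rcases eq_or_lt_of_le hB0 with hBz | hBp
    · have := key 1 one_pos le_rfl
      rw [← hBz] at this; linarith
    · set t : ℝ := min 1 (-A / (2 * B)) with ht
      have ht0 : 0 < t := lt_min one_pos (div_pos (by linarith) (by linarith))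
      have ht1 : t ≤ 1 := min_le_left _ _
      have htb : t ≤ -A / (2 * B) := min_le_right _ _
      have := key t ht0 ht1
      have : t * B ≤ (-A / (2 * B)) * B := mul_le_mul_of_nonneg_right htb hB0
      have hdiv : (-A / (2 * B)) * B = -A / 2 := by field_simp
      nlinarith [key t ht0 ht1]
  have : ⟪v - u, z - u⟫_ℝ = -⟪u - v, z - u⟫_ℝ := by
    rw [← inner_neg_left]; congr 1; abel
  rw [this]
  linarith [hA0]

lemma stmt13_refl_prox_nonexp
    (g : E → ℝ) (hg : ConvexOn ℝ Set.univ g) (c : ℝ) (hc : 0 < c)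
    (v₁ v₂ u₁ u₂ : E)
    (hu₁ : IsMinOn (fun z => g z + c * ‖z - v₁‖ ^ 2) Set.univ u₁)
    (hu₂ : IsMinOn (fun z => g z + c * ‖z - v₂‖ ^ 2) Set.univ u₂) :
    ‖((2:ℝ) • u₁ - v₁) - ((2:ℝ) • u₂ - v₂)‖ ≤ ‖v₁ - v₂‖ := by
  have h1 := stmt13_prox_subgrad g hg c hc v₁ u₁ hu₁ u₂
  have h2 := stmt13_prox_subgrad g hg c hc v₂ u₂ hu₂ u₁
  have e : ⟪v₁ - u₁, u₂ - u₁⟫_ℝ + ⟪v₂ - u₂, u₁ - u₂⟫_ℝ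
      = ‖u₁ - u₂‖ ^ 2 - ⟪u₁ - u₂, v₁ - v₂⟫_ℝ := by
    have h' : ⟪v₁ - u₁, u₂ - u₁⟫_ℝ = - ⟪v₁ - u₁, u₁ - u₂⟫_ℝ := by
      rw [← inner_neg_right, neg_sub]
    rw [h']
    have h'' : -⟪v₁ - u₁, u₁ - u₂⟫_ℝ + ⟪v₂ - u₂, u₁ - u₂⟫_ℝ
        = ⟪(v₂ - u₂) - (v₁ - u₁), u₁ - u₂⟫_ℝ := by
      simp only [inner_sub_left]; ring
    rw [h'']
    have h2' : (v₂ - u₂) - (v₁ - u₁) = (u₁ - u₂) - (v₁ - v₂) := by abel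
    rw [h2', inner_sub_left, real_inner_self_eq_norm_sq,
      real_inner_comm (v₁ - v₂) (u₁ - u₂)]
  have hfirm : ‖u₁ - u₂‖ ^ 2 ≤ ⟪u₁ - u₂, v₁ - v₂⟫_ℝ := by nlinarith [h1, h2, e, hc]
  have hvec : ((2:ℝ) • u₁ - v₁) - ((2:ℝ) • u₂ - v₂)
      = (2:ℝ) • (u₁ - u₂) - (v₁ - v₂) := by
    rw [smul_sub]; abel
  have hsq : ‖((2:ℝ) • u₁ - v₁) - ((2:ℝ) • u₂ - v₂)‖ ^ 2 ≤ ‖v₁ - v₂‖ ^ 2 := by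
    rw [hvec, norm_sub_sq_real, real_inner_smul_left, norm_smul]
    simp only [Real.norm_ofNat]
    nlinarith [hfirm]
  nlinarith [hsq, norm_nonneg (((2:ℝ) • u₁ - v₁) - ((2:ℝ) • u₂ - v₂)),
    norm_nonneg (v₁ - v₂)]

end Aux

set_option maxHeartbeats 1000000 in
theorem stmt13 (n : ℕ) (f g : EuclideanSpace ℝ (Fin n) → ℝ) (m L μ : ℝ)
    (hm : 0 < m) (hmL : m ≤ L) (hμ : 0 < μ) (hμL : μ < 2 / L)
    (hdiff : Differentiable ℝ f)
    (hsc : ∀ x y : EuclideanSpace ℝ (Fin n),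
      f y ≥ f x + ⟪gradient f x, y - x⟫_ℝ + m / 2 * ‖y - x‖ ^ 2)
    (hlip : ∀ x y : EuclideanSpace ℝ (Fin n),
      ‖gradient f x - gradient f y‖ ≤ L * ‖x - y‖)
    (hg : ConvexOn ℝ Set.univ g) (hgc : LowerSemicontinuous g)
    (Pf Pg : EuclideanSpace ℝ (Fin n) → EuclideanSpace ℝ (Fin n))
    (hPf : ∀ v : EuclideanSpace ℝ (Fin n), Pf v + μ • gradient f (Pf v) = v)
    (hPg : ∀ v : EuclideanSpace ℝ (Fin n),
      IsMinOn (fun z => g z + 1 / (2 * μ) * ‖z - v‖ ^ 2) Set.univ (Pg v)) :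
    (∀ x y : EuclideanSpace ℝ (Fin n),
      ‖((2 : ℝ) • Pg ((2 : ℝ) • Pf x - x) - ((2 : ℝ) • Pf x - x)) -
          ((2 : ℝ) • Pg ((2 : ℝ) • Pf y - y) - ((2 : ℝ) • Pf y - y))‖ ≤
        max |1 - μ * m| |1 - μ * L| * ‖x - y‖) ∧
    max |1 - μ * m| |1 - μ * L| < 1 ∧
    ∃! z : EuclideanSpace ℝ (Fin n),
      (2 : ℝ) • Pg ((2 : ℝ) • Pf z - z) - ((2 : ℝ) • Pf z - z) = z := by
  have hL0 : 0 < L := lt_of_lt_of_le hm hmL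
  have hμL2 : μ * L < 2 := by
    rw [lt_div_iff₀ hL0] at hμL; exact hμL
  set σ : ℝ := max |1 - μ * m| |1 - μ * L| with hσdef
  have hσ0 : 0 ≤ σ := le_trans (abs_nonneg _) (le_max_left _ _)
  have hμm2 : μ * m < 2 := lt_of_le_of_lt (mul_le_mul_of_nonneg_left hmL hμ.le) hμL2
  have hσ1 : σ < 1 := by
    apply max_lt
    · rw [abs_lt]
      constructor <;> nlinarith [mul_pos hμ hm]
    · rw [abs_lt]
      constructor <;> nlinarith [mul_pos hμ hL0]
  -- monotonicity of the gradient
  have hmono : ∀ x y : EuclideanSpace ℝ (Fin n),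
      m * ‖x - y‖ ^ 2 ≤ ⟪gradient f x - gradient f y, x - y⟫_ℝ := by
    intro x y
    have h1 := hsc x y
    have h2 := hsc y x
    have e1 : ⟪gradient f x, y - x⟫_ℝ = -⟪gradient f x, x - y⟫_ℝ := by
      rw [← inner_neg_right, neg_sub]
    have e2 : ⟪gradient f x - gradient f y, x - y⟫_ℝ
        = ⟪gradient f x, x - y⟫_ℝ - ⟪gradient f y, x - y⟫_ℝ := inner_sub_left _ _ _
    have e3 : ‖y - x‖ = ‖x - y‖ := norm_sub_rev _ _
    rw [e3] at h1
    linarith [h1, h2]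
  -- cocoercivity / interpolation inequality
  have hstar : ∀ x y : EuclideanSpace ℝ (Fin n),
      ‖gradient f x - gradient f y‖ ^ 2 + m * L * ‖x - y‖ ^ 2
        ≤ (m + L) * ⟪gradient f x - gradient f y, x - y⟫_ℝ := by
    rcases eq_or_lt_of_le hmL with heq | hlt
    · intro x y
      subst heq
      have h1 := hmono x y
      have h2 := hlip x y
      nlinarith [mul_self_le_mul_self (norm_nonneg (gradient f x - gradient f y)) h2,
        norm_nonneg (x - y), sq_nonneg (‖x - y‖)]
    · set ℓ : ℝ := L - m with hℓdef
      have hℓ : 0 < ℓ := by simp [hℓdef]; linarith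
      set D : EuclideanSpace ℝ (Fin n) → EuclideanSpace ℝ (Fin n) :=
        fun x => gradient f x - m • x with hD
      set h : EuclideanSpace ℝ (Fin n) → ℝ := fun x => f x - m / 2 * ‖x‖ ^ 2 with hh
      have hiden : ∀ x y : EuclideanSpace ℝ (Fin n),
          ⟪D x, y - x⟫_ℝ = ⟪gradient f x, y - x⟫_ℝ
            - m * ⟪x, y⟫_ℝ + m * ‖x‖ ^ 2 := by
        intro x y
        rw [hD]
        simp only [inner_sub_left, real_inner_smul_left, inner_sub_right,
          real_inner_self_eq_norm_sq]
        ring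
      have hnid : ∀ x y : EuclideanSpace ℝ (Fin n),
          ‖y - x‖ ^ 2 = ‖y‖ ^ 2 - 2 * ⟪x, y⟫_ℝ + ‖x‖ ^ 2 := by
        intro x y
        rw [norm_sub_sq_real, real_inner_comm]
      have hconv' : ∀ x y : EuclideanSpace ℝ (Fin n),
          h x + ⟪D x, y - x⟫_ℝ ≤ h y := by
        intro x y
        have h1 := hsc x y
        rw [hiden x y, hh]
        simp only
        rw [hnid x y] at h1
        nlinarith [h1]
      have hdesc' : ∀ x y : EuclideanSpace ℝ (Fin n),
          h y ≤ h x + ⟪D x, y - x⟫_ℝ + ℓ / 2 * ‖y - x‖ ^ 2 := by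
        intro x y
        have h1 := stmt13_descent f L hL0.le hdiff hlip x y
        rw [hiden x y, hh]
        simp only
        rw [hnid x y] at h1 ⊢
        nlinarith [h1]
      have hkey : ∀ x y : EuclideanSpace ℝ (Fin n),
          h x + ⟪D x, y - x⟫_ℝ + 1 / (2 * ℓ) * ‖D y - D x‖ ^ 2 ≤ h y := by
        intro x y
        set Δ : EuclideanSpace ℝ (Fin n) := D y - D x with hΔ
        set z : EuclideanSpace ℝ (Fin n) := y - (1 / ℓ) • Δ with hz
        have h1 := hconv' x z
        have h2 := hdesc' y z
        have e1 : ⟪D x, z - x⟫_ℝ = ⟪D x, y - x⟫_ℝ - (1 / ℓ) * ⟪D x, Δ⟫_ℝ := by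
          have : z - x = (y - x) - (1 / ℓ) • Δ := by rw [hz]; abel
          rw [this, inner_sub_right, real_inner_smul_right]
        have e2 : ⟪D y, z - y⟫_ℝ = -((1 / ℓ) * ⟪D y, Δ⟫_ℝ) := by
          have : z - y = -((1 / ℓ) • Δ) := by rw [hz]; abel
          rw [this, inner_neg_right, real_inner_smul_right]
        have e3 : ‖z - y‖ ^ 2 = (1 / ℓ) ^ 2 * ‖Δ‖ ^ 2 := by
          have : z - y = -((1 / ℓ) • Δ) := by rw [hz]; abel
          rw [this, norm_neg, norm_smul, Real.norm_eq_abs, mul_pow, sq_abs]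
        have e4 : ⟪D y, Δ⟫_ℝ - ⟪D x, Δ⟫_ℝ = ‖Δ‖ ^ 2 := by
          rw [← inner_sub_left, ← hΔ, real_inner_self_eq_norm_sq]
        have e4' : (1 / ℓ) * ⟪D y, Δ⟫_ℝ - (1 / ℓ) * ⟪D x, Δ⟫_ℝ
            = (1 / ℓ) * ‖Δ‖ ^ 2 := by rw [← mul_sub, e4]
        have e5 : ℓ / 2 * ((1 / ℓ) ^ 2 * ‖Δ‖ ^ 2) = 1 / (2 * ℓ) * ‖Δ‖ ^ 2 := by
          field_simp
        have e6 : (1 / ℓ) * ‖Δ‖ ^ 2 = 2 * (1 / (2 * ℓ) * ‖Δ‖ ^ 2) := by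
          field_simp
        rw [e1] at h1
        rw [e2, e3, e5] at h2
        linarith [h1, h2, e4', e6]
      intro x y
      have hk1 := hkey x y
      have hk2 := hkey y x
      have e7 : ⟪D x, y - x⟫_ℝ = -⟪D x, x - y⟫_ℝ := by
        rw [← inner_neg_right, neg_sub]
      have e8 : ‖D y - D x‖ = ‖D x - D y‖ := norm_sub_rev _ _
      rw [e7, e8] at hk1
      have hco : ⟪D x, x - y⟫_ℝ - ⟪D y, x - y⟫_ℝ
          ≥ 2 * (1 / (2 * ℓ) * ‖D x - D y‖ ^ 2) := by linarith [hk1, hk2]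
      have e9 : ⟪D x, x - y⟫_ℝ - ⟪D y, x - y⟫_ℝ = ⟪D x - D y, x - y⟫_ℝ :=
        (inner_sub_left _ _ _).symm
      rw [e9] at hco
      have e10 : 2 * (1 / (2 * ℓ) * ‖D x - D y‖ ^ 2) = (1 / ℓ) * ‖D x - D y‖ ^ 2 := by
        field_simp
      rw [e10] at hco
      -- translate back to f
      have eD : D x - D y = (gradient f x - gradient f y) - m • (x - y) := by
        rw [hD]
        simp only
        rw [smul_sub]
        abel
      have e11 : ⟪D x - D y, x - y⟫_ℝ
          = ⟪gradient f x - gradient f y, x - y⟫_ℝ - m * ‖x - y‖ ^ 2 := by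
        rw [eD, inner_sub_left, real_inner_smul_left, real_inner_self_eq_norm_sq]
      have e12 : ‖D x - D y‖ ^ 2 = ‖gradient f x - gradient f y‖ ^ 2
          - 2 * m * ⟪gradient f x - gradient f y, x - y⟫_ℝ + m ^ 2 * ‖x - y‖ ^ 2 := by
        rw [eD, norm_sub_sq_real, real_inner_smul_right, norm_smul,
          Real.norm_eq_abs, mul_pow, sq_abs]
        ring
      rw [e11, e12] at hco
      have hco' : ℓ * (⟪gradient f x - gradient f y, x - y⟫_ℝ - m * ‖x - y‖ ^ 2)
          ≥ ‖gradient f x - gradient f y‖ ^ 2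
            - 2 * m * ⟪gradient f x - gradient f y, x - y⟫_ℝ
            + m ^ 2 * ‖x - y‖ ^ 2 := by
        have := mul_le_mul_of_nonneg_left hco hℓ.le
        calc ‖gradient f x - gradient f y‖ ^ 2
              - 2 * m * ⟪gradient f x - gradient f y, x - y⟫_ℝ
              + m ^ 2 * ‖x - y‖ ^ 2
            = ℓ * ((1 / ℓ) * (‖gradient f x - gradient f y‖ ^ 2
              - 2 * m * ⟪gradient f x - gradient f y, x - y⟫_ℝ
              + m ^ 2 * ‖x - y‖ ^ 2)) := by field_simp
          _ ≤ ℓ * (⟪gradient f x - gradient f y, x - y⟫_ℝ - m * ‖x - y‖ ^ 2) := this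
      rw [hℓdef] at hco'
      nlinarith [hco']
  -- contraction of the reflected gradient step
  have hRf : ∀ x y : EuclideanSpace ℝ (Fin n),
      ‖((2:ℝ) • Pf x - x) - ((2:ℝ) • Pf y - y)‖ ≤ σ * ‖x - y‖ := by
    intro x y
    set u := Pf x with hu
    set v := Pf y with hv
    set w : EuclideanSpace ℝ (Fin n) := u - v with hwdef
    set d : EuclideanSpace ℝ (Fin n) := gradient f u - gradient f v with hddef
    have hs := hmono u v
    have hDle := hlip u v
    have hst := hstar u v
    rw [← hwdef, ← hddef] at hs hDle hst
    have hx : u + μ • gradient f u = x := by rw [hu]; exact hPf x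
    have hy : v + μ • gradient f v = y := by rw [hv]; exact hPf y
    have hxy : x - y = w + μ • d := by
      rw [← hx, ← hy, hwdef, hddef, smul_sub]
      abel
    have hRexp : ((2:ℝ) • Pf x - x) - ((2:ℝ) • Pf y - y) = w - μ • d := by
      rw [← hu, ← hv, ← hx, ← hy, hwdef, hddef, smul_sub, two_smul, two_smul]
      abel
    -- squared contraction
    have hsq : ‖w - μ • d‖ ^ 2 ≤ σ ^ 2 * ‖w‖ ^ 2 := by
      by_cases hw0 : w = 0
      · have hd0 : d = 0 := by
          have h' : ‖d‖ ≤ 0 := by simpa [hw0] using hDle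
          exact norm_le_zero_iff.1 (le_antisymm h' (norm_nonneg d) ▸ le_rfl)
        rw [hw0, hd0]
        simp
      · have hW : 0 < ‖w‖ := norm_pos_iff.2 hw0
        have hCS : ⟪d, w⟫_ℝ ≤ ‖d‖ * ‖w‖ := real_inner_le_norm _ _
        have hDlow : m * ‖w‖ ≤ ‖d‖ := by
          have h1 : m * ‖w‖ ^ 2 ≤ ‖d‖ * ‖w‖ := le_trans hs hCS
          nlinarith [hW]
        have hexp : ‖w - μ • d‖ ^ 2
            = ‖w‖ ^ 2 - 2 * μ * ⟪d, w⟫_ℝ + μ ^ 2 * ‖d‖ ^ 2 := by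
          rw [norm_sub_sq_real, real_inner_smul_right, norm_smul,
            Real.norm_eq_abs, mul_pow, sq_abs, real_inner_comm w d]
          ring
        have hb1 : (1 - μ * m) ^ 2 ≤ σ ^ 2 := by
          have := pow_le_pow_left₀ (abs_nonneg (1 - μ * m)) (le_max_left _ _ :
            |1 - μ * m| ≤ σ) 2
          rwa [sq_abs] at this
        have hb2 : (1 - μ * L) ^ 2 ≤ σ ^ 2 := by
          have := pow_le_pow_left₀ (abs_nonneg (1 - μ * L)) (le_max_right _ _ :
            |1 - μ * L| ≤ σ) 2
          rwa [sq_abs] at this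
        have hmLpos : (0:ℝ) < m + L := by linarith
        have hP2 : (0:ℝ) ≤ μ * ((m + L) * ⟪d, w⟫_ℝ - (‖d‖ ^ 2 + m * L * ‖w‖ ^ 2)) :=
          mul_nonneg hμ.le (by linarith [hst])
        rcases le_or_gt (μ * (m + L)) 2 with hcase | hcase
        · have hP1 : (0:ℝ) ≤ μ * (2 - μ * (m + L)) * (‖d‖ ^ 2 - m ^ 2 * ‖w‖ ^ 2) :=
            mul_nonneg (mul_nonneg hμ.le (by linarith))
              (by nlinarith [hDlow, hW, norm_nonneg d])
          have hiden2 : (m + L) * ((1 - μ * m) ^ 2 * ‖w‖ ^ 2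
              - (‖w‖ ^ 2 - 2 * μ * ⟪d, w⟫_ℝ + μ ^ 2 * ‖d‖ ^ 2))
              = μ * (2 - μ * (m + L)) * (‖d‖ ^ 2 - m ^ 2 * ‖w‖ ^ 2)
                + 2 * (μ * ((m + L) * ⟪d, w⟫_ℝ - (‖d‖ ^ 2 + m * L * ‖w‖ ^ 2))) := by
            ring
          have hX : (m + L) * (0:ℝ) ≤ (m + L) * ((1 - μ * m) ^ 2 * ‖w‖ ^ 2
              - (‖w‖ ^ 2 - 2 * μ * ⟪d, w⟫_ℝ + μ ^ 2 * ‖d‖ ^ 2)) := by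
            rw [hiden2]; linarith
          have hX' := le_of_mul_le_mul_left hX hmLpos
          have hstep : ‖w - μ • d‖ ^ 2 ≤ (1 - μ * m) ^ 2 * ‖w‖ ^ 2 := by
            rw [hexp]; linarith
          nlinarith [hstep, hb1, sq_nonneg ‖w‖]
        · have hP1 : (0:ℝ) ≤ μ * (μ * (m + L) - 2) * (L ^ 2 * ‖w‖ ^ 2 - ‖d‖ ^ 2) :=
            mul_nonneg (mul_nonneg hμ.le (by linarith))
              (by nlinarith [hDle, norm_nonneg d, norm_nonneg w])
          have hiden2 : (m + L) * ((1 - μ * L) ^ 2 * ‖w‖ ^ 2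
              - (‖w‖ ^ 2 - 2 * μ * ⟪d, w⟫_ℝ + μ ^ 2 * ‖d‖ ^ 2))
              = μ * (μ * (m + L) - 2) * (L ^ 2 * ‖w‖ ^ 2 - ‖d‖ ^ 2)
                + 2 * (μ * ((m + L) * ⟪d, w⟫_ℝ - (‖d‖ ^ 2 + m * L * ‖w‖ ^ 2))) := by
            ring
          have hX : (m + L) * (0:ℝ) ≤ (m + L) * ((1 - μ * L) ^ 2 * ‖w‖ ^ 2
              - (‖w‖ ^ 2 - 2 * μ * ⟪d, w⟫_ℝ + μ ^ 2 * ‖d‖ ^ 2)) := by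
            rw [hiden2]; linarith
          have hX' := le_of_mul_le_mul_left hX hmLpos
          have hstep : ‖w - μ • d‖ ^ 2 ≤ (1 - μ * L) ^ 2 * ‖w‖ ^ 2 := by
            rw [hexp]; linarith
          nlinarith [hstep, hb2, sq_nonneg ‖w‖]
    have hwle : ‖w‖ ^ 2 ≤ ‖x - y‖ ^ 2 := by
      have h0 : (0:ℝ) ≤ ⟪w, d⟫_ℝ := by
        rw [real_inner_comm]
        exact le_trans (mul_nonneg hm.le (sq_nonneg ‖w‖)) hs
      rw [hxy, norm_add_sq_real, real_inner_smul_right, norm_smul,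
        Real.norm_eq_abs, mul_pow, sq_abs]
      have h1 : (0:ℝ) ≤ μ ^ 2 * ‖d‖ ^ 2 := by positivity
      have h2 : (0:ℝ) ≤ 2 * (μ * ⟪w, d⟫_ℝ) :=
        mul_nonneg (by norm_num) (mul_nonneg hμ.le h0)
      linarith [h1, h2]
    rw [hRexp]
    have hfin : ‖w - μ • d‖ ^ 2 ≤ σ ^ 2 * ‖x - y‖ ^ 2 := by
      calc ‖w - μ • d‖ ^ 2 ≤ σ ^ 2 * ‖w‖ ^ 2 := hsq
        _ ≤ σ ^ 2 * ‖x - y‖ ^ 2 := mul_le_mul_of_nonneg_left hwle (sq_nonneg σ)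
    refine le_of_pow_le_pow_left₀ two_ne_zero (mul_nonneg hσ0 (norm_nonneg _)) ?_
    rw [mul_pow]
    exact hfin
  have hcpos : (0:ℝ) < 1 / (2 * μ) := by positivity
  have part1 : ∀ x y : EuclideanSpace ℝ (Fin n),
      ‖((2 : ℝ) • Pg ((2 : ℝ) • Pf x - x) - ((2 : ℝ) • Pf x - x)) -
          ((2 : ℝ) • Pg ((2 : ℝ) • Pf y - y) - ((2 : ℝ) • Pf y - y))‖ ≤ σ * ‖x - y‖ := by
    intro x y
    calc ‖((2 : ℝ) • Pg ((2 : ℝ) • Pf x - x) - ((2 : ℝ) • Pf x - x)) -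
          ((2 : ℝ) • Pg ((2 : ℝ) • Pf y - y) - ((2 : ℝ) • Pf y - y))‖
        ≤ ‖((2:ℝ) • Pf x - x) - ((2:ℝ) • Pf y - y)‖ :=
          stmt13_refl_prox_nonexp g hg (1 / (2 * μ)) hcpos _ _ _ _
            (hPg ((2:ℝ) • Pf x - x)) (hPg ((2:ℝ) • Pf y - y))
      _ ≤ σ * ‖x - y‖ := hRf x y
  refine ⟨part1, hσ1, ?_⟩
  set T : EuclideanSpace ℝ (Fin n) → EuclideanSpace ℝ (Fin n) :=
    fun z => (2 : ℝ) • Pg ((2 : ℝ) • Pf z - z) - ((2 : ℝ) • Pf z - z) with hT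
  have hlipT : LipschitzWith ⟨σ, hσ0⟩ T := by
    apply LipschitzWith.of_dist_le_mul
    intro x y
    rw [dist_eq_norm, dist_eq_norm]; exact part1 x y
  have hcontr : ContractingWith ⟨σ, hσ0⟩ T := by
    constructor
    · exact_mod_cast hσ1
    · exact hlipT
  exact ⟨hcontr.fixedPoint T, hcontr.fixedPoint_isFixedPt,
    fun z hz => hcontr.fixedPoint_unique hz⟩
end

section
/- Let f be twice continuously differentiable with ∇²f(x) ⪯ L·I, g proper closed convex, 0 < μ < 1/L, and suppose the proximal PL inequality ‖G_μ(x)‖² ≥ γ(F_μ(x) − F_μ⋆) holds with γ > 0. Then along any solution of the proximal gradient flow ẋ = −μ G_μ(x), the Lyapunov function V(x) = F_μ(x) − F_μ⋆ satisfies V̇(x(t)) ≤ −γμ(1 − μL) V(x(t)). -/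
open InnerProductSpace

section Aux
variable {E : Type*} [NormedAddCommGroup E] [InnerProductSpace ℝ E]

lemma prox_subgrad (μ : ℝ) (hμ : 0 < μ) (g : E → ℝ) (hg : ConvexOn ℝ Set.univ g)
    (P : E → E) (hP : ∀ v : E, IsMinOn (fun z => g z + 1 / (2 * μ) * ‖z - v‖ ^ 2) Set.univ (P v))
    (v z : E) : g (P v) + (1/μ) * ⟪v - P v, z - P v⟫_ℝ ≤ g z := by
  have key : ∀ t : ℝ, 0 < t → t ≤ 1 →
      g (P v) + (1/μ) * ⟪v - P v, z - P v⟫_ℝ ≤ g z + (t/(2*μ)) * ‖z - P v‖^2 := by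
    intro t ht ht1
    set w := (1-t) • P v + t • z with hw
    have hconv : g w ≤ (1-t) * g (P v) + t * g z := by
      have := hg.2 (Set.mem_univ (P v)) (Set.mem_univ z) (by linarith : (0:ℝ) ≤ 1 - t) ht.le
        (by ring)
      simpa using this
    have hmin := isMinOn_iff.mp (hP v) w (Set.mem_univ w)
    have hwv : w - v = (P v - v) + t • (z - P v) := by
      rw [hw]; module
    have hnorm : ‖w - v‖^2 = ‖P v - v‖^2 + 2 * (t * ⟪P v - v, z - P v⟫_ℝ) + t^2 * ‖z - P v‖^2 := by
      rw [hwv, norm_add_sq_real, real_inner_smul_right, norm_smul, Real.norm_eq_abs,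
        abs_of_pos ht, mul_pow]
    have hinn : ⟪P v - v, z - P v⟫_ℝ = - ⟪v - P v, z - P v⟫_ℝ := by
      rw [show P v - v = -(v - P v) by abel, inner_neg_left]
    have hμ' : (0:ℝ) < 1/μ := by positivity
    -- hmin : g (P v) + 1/(2μ)‖Pv - v‖² ≤ g w + 1/(2μ)‖w - v‖²
    have h2μ : (1:ℝ)/(2*μ) = (1/μ)/2 := by ring
    have h0 : t * (g (P v) + (1/μ) * ⟪v - P v, z - P v⟫_ℝ) ≤
        t * (g z + (t/(2*μ)) * ‖z - P v‖^2) := by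
      rw [hnorm, hinn] at hmin
      have e1 : (1:ℝ)/(2*μ) * (2 * (t * -⟪v - P v, z - P v⟫_ℝ)) = -(t * (1/μ * ⟪v - P v, z - P v⟫_ℝ)) := by
        field_simp
      have e2 : (1:ℝ)/(2*μ) * (t^2 * ‖z - P v‖^2) = t * (t/(2*μ) * ‖z - P v‖^2) := by
        field_simp
      nlinarith [hmin, hconv]
    exact le_of_mul_le_mul_left h0 ht
  by_cases hzero : ‖z - P v‖^2 = 0
  · have := key 1 one_pos le_rfl
    rw [hzero] at this; linarith
  · have hpos : 0 < ‖z - P v‖^2 := lt_of_le_of_ne (sq_nonneg _) (Ne.symm hzero)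
    refine le_of_forall_pos_le_add fun ε hε => ?_
    set t := min 1 (ε * (2*μ) / ‖z - P v‖^2) with hts
    have ht : 0 < t := lt_min one_pos (by positivity)
    have := key t ht (min_le_left _ _)
    have htle : t * ‖z - P v‖^2 ≤ ε * (2*μ) := by
      calc t * ‖z - P v‖^2 ≤ (ε * (2*μ) / ‖z - P v‖^2) * ‖z - P v‖^2 :=
            mul_le_mul_of_nonneg_right (min_le_right _ _) (sq_nonneg _)
        _ = ε * (2*μ) := div_mul_cancel₀ _ hpos.ne'
    have h2 : (t/(2*μ)) * ‖z - P v‖^2 ≤ ε := by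
      rw [div_mul_eq_mul_div, div_le_iff₀ (by positivity)]
      linarith
    linarith

lemma moreau_hasFDerivAt (μ : ℝ) (hμ : 0 < μ) (g : E → ℝ) (hg : ConvexOn ℝ Set.univ g)
    (P : E → E) (hP : ∀ v : E, IsMinOn (fun z => g z + 1 / (2 * μ) * ‖z - v‖ ^ 2) Set.univ (P v))
    (v : E) :
    HasFDerivAt (fun w => g (P w) + 1 / (2 * μ) * ‖P w - w‖ ^ 2)
      (innerSL ℝ ((1/μ) • (v - P v))) v := by
  set M : E → ℝ := fun w => g (P w) + 1 / (2 * μ) * ‖P w - w‖ ^ 2 with hM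
  have upper : ∀ w : E, M w - M v - ⟪(1/μ) • (v - P v), w - v⟫_ℝ ≤ 1/(2*μ) * ‖w - v‖^2 := by
    intro w
    have hmin := isMinOn_iff.mp (hP w) (P v) (Set.mem_univ (P v))
    have hexp : ‖P v - w‖^2 = ‖P v - v‖^2 + 2 * ⟪P v - v, v - w⟫_ℝ + ‖v - w‖^2 := by
      rw [show P v - w = (P v - v) + (v - w) by abel, norm_add_sq_real]
    have hsm : ⟪(1/μ) • (v - P v), w - v⟫_ℝ = (1/μ) * ⟪v - P v, w - v⟫_ℝ :=
      real_inner_smul_left _ _ _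
    have hneg : ⟪P v - v, v - w⟫_ℝ = ⟪v - P v, w - v⟫_ℝ := by
      rw [show P v - v = -(v - P v) by abel, show v - w = -(w - v) by abel, inner_neg_neg]
    have hnn : ‖v - w‖ = ‖w - v‖ := norm_sub_rev _ _
    have e1 : (1:ℝ)/(2*μ) * (2 * ⟪v - P v, w - v⟫_ℝ) = (1/μ) * ⟪v - P v, w - v⟫_ℝ := by
      field_simp
    rw [hneg, hnn] at hexp
    rw [hexp] at hmin
    simp only [hM]
    rw [hsm]
    nlinarith [hmin, e1]
  have lower : ∀ w : E, 0 ≤ M w - M v - ⟪(1/μ) • (v - P v), w - v⟫_ℝ := by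
    intro w
    have hsub := prox_subgrad μ hμ g hg P hP v (P w)
    set u := v - P v with hu
    set a := P w - w with ha
    have hdecomp : P w - P v = a + (w - v) + u := by rw [ha, hu]; abel
    have hinner : ⟪u, P w - P v⟫_ℝ = ⟪u, a⟫_ℝ + ⟪u, w - v⟫_ℝ + ‖u‖^2 := by
      rw [hdecomp, inner_add_right, inner_add_right, real_inner_self_eq_norm_sq]
    have hsq : ‖a + u‖^2 = ‖a‖^2 + 2 * ⟪a, u⟫_ℝ + ‖u‖^2 := norm_add_sq_real a u
    have hcomm : ⟪u, a⟫_ℝ = ⟪a, u⟫_ℝ := real_inner_comm _ _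
    have hsm : ⟪(1/μ) • u, w - v⟫_ℝ = (1/μ) * ⟪u, w - v⟫_ℝ := real_inner_smul_left _ _ _
    have hμ' : (0:ℝ) < 1/μ := by positivity
    have hsq' : (1/μ) * ‖a + u‖^2 = (1/μ)*‖a‖^2 + 2*((1/μ)*⟪u, a⟫_ℝ) + (1/μ)*‖u‖^2 := by
      rw [hsq, ← hcomm]; ring
    have hge : (0:ℝ) ≤ (1/μ) * ‖a + u‖^2 := by positivity
    have hnu : ‖P v - v‖ = ‖u‖ := by rw [hu]; exact norm_sub_rev _ _
    rw [hinner] at hsub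
    simp only [hM]
    rw [hsm, hnu, show P w - w = a from ha.symm,
      show (1:ℝ)/(2*μ) = (1/μ)/2 from by ring]
    linarith [hsub, hsq', hge]
  rw [hasFDerivAt_iff_isLittleO_nhds_zero]
  rw [Asymptotics.isLittleO_iff]
  intro c hc
  have hball : Metric.ball (0:E) (2*μ*c) ∈ nhds (0:E) := Metric.ball_mem_nhds _ (by positivity)
  filter_upwards [hball] with h hh
  rw [Metric.mem_ball, dist_zero_right] at hh
  have hU := upper (v + h)
  have hL' := lower (v + h)
  simp only [add_sub_cancel_left] at hU hL'
  have habs : |M (v + h) - M v - ⟪(1/μ) • (v - P v), h⟫_ℝ| ≤ 1/(2*μ) * ‖h‖^2 := by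
    rw [abs_le]; constructor
    · have hx0 : (0:ℝ) ≤ 1/(2*μ) * ‖h‖^2 := by positivity
      linarith
    · exact hU
  have : ‖M (v + h) - M v - (innerSL ℝ ((1/μ) • (v - P v))) h‖ ≤ 1/(2*μ) * ‖h‖^2 := by
    rw [Real.norm_eq_abs, innerSL_apply_apply]; exact habs
  refine this.trans ?_
  have : 1/(2*μ) * ‖h‖^2 = (‖h‖/(2*μ)) * ‖h‖ := by ring
  rw [this]
  apply mul_le_mul_of_nonneg_right _ (norm_nonneg h)
  rw [div_le_iff₀ (by positivity)]
  nlinarith [hh]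

end Aux

theorem stmt17 (n : ℕ) (f g : EuclideanSpace ℝ (Fin n) → ℝ) (L μ γ Fstar : ℝ)
    (hL : 0 < L) (hμ : 0 < μ) (hμL : μ < 1 / L) (hγ : 0 < γ)
    (hf : ContDiff ℝ 2 f)
    (hhess : ∀ x v : EuclideanSpace ℝ (Fin n),
      ⟪fderiv ℝ (gradient f) x v, v⟫_ℝ ≤ L * ‖v‖ ^ 2)
    (hg : ConvexOn ℝ Set.univ g) (hgc : LowerSemicontinuous g)
    (P : EuclideanSpace ℝ (Fin n) → EuclideanSpace ℝ (Fin n))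
    (hP : ∀ v : EuclideanSpace ℝ (Fin n),
      IsMinOn (fun z => g z + 1 / (2 * μ) * ‖z - v‖ ^ 2) Set.univ (P v))
    -- the forward-backward envelope and its optimal value
    (Fμ : EuclideanSpace ℝ (Fin n) → ℝ)
    (hFμ : ∀ x, Fμ x =
      f x + (g (P (x - μ • gradient f x)) +
        1 / (2 * μ) * ‖P (x - μ • gradient f x) - (x - μ • gradient f x)‖ ^ 2) -
        μ / 2 * ‖gradient f x‖ ^ 2)
    (hFstar : IsGLB (Set.range Fμ) Fstar)
    -- the proximal PL inequality
    (hPL : ∀ x : EuclideanSpace ℝ (Fin n),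
      ‖(1 / μ) • (x - P (x - μ • gradient f x))‖ ^ 2 ≥ γ * (Fμ x - Fstar))
    -- a solution of the proximal gradient flow
    (x : ℝ → EuclideanSpace ℝ (Fin n)) (hx : Differentiable ℝ x)
    (hode : ∀ t : ℝ, 0 ≤ t →
      deriv x t = -(μ • ((1 / μ) • (x t - P (x t - μ • gradient f (x t)))))) :
    ∀ t : ℝ, 0 ≤ t →
      deriv (fun s => Fμ (x s)) t ≤ -(γ * μ * (1 - μ * L)) * (Fμ (x t) - Fstar) := by
  -- differentiability of the gradient
  have hf1 : ContDiff ℝ 1 (fderiv ℝ f) := hf.fderiv_right (by norm_num)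
  have hgrad_diff : Differentiable ℝ (gradient f) := by
    have : Differentiable ℝ (fun y => (toDual ℝ (EuclideanSpace ℝ (Fin n))).symm (fderiv ℝ f y)) :=
      (toDual ℝ (EuclideanSpace ℝ (Fin n))).symm.toContinuousLinearEquiv.differentiable.comp
        (hf1.differentiable (by norm_num))
    exact this
  intro t ht
  set p := x t with hp
  set gp := gradient f p with hgp
  set H := fderiv ℝ (gradient f) p with hH
  set yy := p - μ • gp with hyy
  set G := (1/μ) • (p - P yy) with hG
  set q := (1/μ) • (yy - P yy) with hq
  set x' := deriv x t with hx'def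
  have hx' : HasDerivAt x x' t := (hx t).hasDerivAt
  have hHd : HasFDerivAt (gradient f) H p := (hgrad_diff p).hasFDerivAt
  have hgx : HasDerivAt (fun s => gradient f (x s)) (H x') t := hHd.comp_hasDerivAt t hx'
  have hfd : HasFDerivAt f (toDual ℝ (EuclideanSpace ℝ (Fin n)) gp) p :=
    (hf.differentiable (by norm_num) p).hasGradientAt
  have h1 : HasDerivAt (fun s => f (x s)) (⟪gp, x'⟫_ℝ) t := by
    have h := hfd.comp_hasDerivAt t hx'; simp at h; exact h
  have hψ : HasDerivAt (fun s => x s - μ • gradient f (x s)) (x' - μ • H x') t :=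
    hx'.sub (hgx.const_smul μ)
  have hMd := moreau_hasFDerivAt μ hμ g hg P hP yy
  have h2 : HasDerivAt
      (fun s => g (P (x s - μ • gradient f (x s))) +
        1 / (2 * μ) * ‖P (x s - μ • gradient f (x s)) - (x s - μ • gradient f (x s))‖ ^ 2)
      (⟪q, x' - μ • H x'⟫_ℝ) t := by
    exact hMd.comp_hasDerivAt t hψ
  have h3 : HasDerivAt (fun s => ‖gradient f (x s)‖ ^ 2)
      (⟪gp, H x'⟫_ℝ + ⟪H x', gp⟫_ℝ) t := by
    have := hgx.inner ℝ hgx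
    simpa only [real_inner_self_eq_norm_sq] using this
  have hT : HasDerivAt
      (fun s => f (x s) + (g (P (x s - μ • gradient f (x s))) +
        1 / (2 * μ) * ‖P (x s - μ • gradient f (x s)) - (x s - μ • gradient f (x s))‖ ^ 2) -
        μ / 2 * ‖gradient f (x s)‖ ^ 2)
      (⟪gp, x'⟫_ℝ + ⟪q, x' - μ • H x'⟫_ℝ - μ/2 * (⟪gp, H x'⟫_ℝ + ⟪H x', gp⟫_ℝ)) t :=
    (h1.add h2).sub (h3.const_mul (μ/2))
  have hfun : (fun s => Fμ (x s)) = (fun s => f (x s) + (g (P (x s - μ • gradient f (x s))) +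
        1 / (2 * μ) * ‖P (x s - μ • gradient f (x s)) - (x s - μ • gradient f (x s))‖ ^ 2) -
        μ / 2 * ‖gradient f (x s)‖ ^ 2) := funext fun s => hFμ (x s)
  rw [hfun, hT.deriv]
  -- algebraic identities
  have hqG : q = G - gp := by
    rw [hq, hG, hyy]
    match_scalars <;> field_simp
  have hxeq : x' = -(μ • G) := hode t ht
  have hHx' : H x' = -(μ • H G) := by rw [hxeq, map_neg, map_smul]
  have hD : ⟪gp, x'⟫_ℝ + ⟪q, x' - μ • H x'⟫_ℝ - μ/2 * (⟪gp, H x'⟫_ℝ + ⟪H x', gp⟫_ℝ)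
      = -(μ * ‖G‖^2) + μ^2 * ⟪G, H G⟫_ℝ := by
    rw [hqG, hxeq]
    simp only [map_neg, map_smul, smul_neg, inner_neg_left, inner_neg_right, inner_sub_left,
      inner_sub_right, sub_neg_eq_add, inner_add_left, inner_add_right, real_inner_smul_left,
      real_inner_smul_right, real_inner_self_eq_norm_sq]
    linear_combination (-(μ^2)/2) * (real_inner_comm (H G) gp)
  rw [hD]
  -- final inequality
  have hGG : ⟪H G, G⟫_ℝ ≤ L * ‖G‖^2 := hhess p G
  have hcomm : ⟪G, H G⟫_ℝ = ⟪H G, G⟫_ℝ := real_inner_comm _ _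
  have hPLp : ‖G‖^2 ≥ γ * (Fμ p - Fstar) := hPL p
  have h1μL : 0 < 1 - μ * L := by
    have := (lt_div_iff₀ hL).mp hμL
    linarith
  nlinarith [mul_le_mul_of_nonneg_left hGG (by positivity : (0:ℝ) ≤ μ^2),
    mul_le_mul_of_nonneg_left hPLp (by positivity : (0:ℝ) ≤ γ * 0 + μ * (1 - μ*L)),
    mul_pos hμ h1μL]
end

section
/- For f with L-Lipschitz gradient, g proper closed convex, and μ > 0, the generalized gradient map satisfies the subgradient inequality 0 ≤ μ‖G_μ(x)‖² ≤ g(x) − g(prox_{μg}(x − μ∇f(x))) + μ⟨∇f(x), G_μ(x)⟩ for all x. -/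
open InnerProductSpace

/-- The subdifferential of a convex function `g`. -/
def subdiff {n : ℕ} (g : EuclideanSpace ℝ (Fin n) → ℝ)
    (x : EuclideanSpace ℝ (Fin n)) : Set (EuclideanSpace ℝ (Fin n)) :=
  {z | ∀ y, g y ≥ g x + ⟪z, y - x⟫_ℝ}

theorem stmt19 (n : ℕ) (f g : EuclideanSpace ℝ (Fin n) → ℝ) (L μ : ℝ)
    (hL : 0 < L) (hμ : 0 < μ)
    (hdiff : Differentiable ℝ f)
    (hlip : ∀ x y : EuclideanSpace ℝ (Fin n),
      ‖gradient f x - gradient f y‖ ≤ L * ‖x - y‖)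
    (hg : ConvexOn ℝ Set.univ g)
    (P : EuclideanSpace ℝ (Fin n) → EuclideanSpace ℝ (Fin n))
    (hP : ∀ v u : EuclideanSpace ℝ (Fin n),
      P v = u ↔ (1 / μ) • (v - u) ∈ subdiff g u) :
    ∀ x : EuclideanSpace ℝ (Fin n),
      0 ≤ μ * ‖(1 / μ) • (x - P (x - μ • gradient f x))‖ ^ 2 ∧
      μ * ‖(1 / μ) • (x - P (x - μ • gradient f x))‖ ^ 2 ≤
        g x - g (P (x - μ • gradient f x)) +
          μ * ⟪gradient f x, (1 / μ) • (x - P (x - μ • gradient f x))⟫_ℝ := by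
  intro x
  set u := P (x - μ • gradient f x) with hu
  set G : EuclideanSpace ℝ (Fin n) := (1 / μ) • (x - u) with hG
  clear_value G
  constructor
  · positivity
  · have hsub : (1 / μ) • ((x - μ • gradient f x) - u) ∈ subdiff g u :=
      (hP (x - μ • gradient f x) u).mp rfl
    have hz : (1 / μ) • ((x - μ • gradient f x) - u) = G - gradient f x := by
      rw [hG, sub_right_comm, smul_sub, smul_smul]
      rw [one_div, inv_mul_cancel₀ (ne_of_gt hμ), one_smul]
    have hkey := hsub x
    rw [hz] at hkey
    have hxu : x - u = μ • G := by
      rw [hG, smul_smul, mul_one_div, div_self (ne_of_gt hμ), one_smul]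
    rw [hxu] at hkey
    have hinner : ⟪G - gradient f x, μ • G⟫_ℝ
        = μ * ‖G‖ ^ 2 - μ * ⟪gradient f x, G⟫_ℝ := by
      rw [inner_sub_left, real_inner_smul_right, real_inner_smul_right,
        real_inner_self_eq_norm_sq]
    rw [hinner] at hkey
    linarith
end
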